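/- arXiv:1707.04654 — 11 statements merged into one kernel-verified Lean document; each statement's English description precedes it below -/
import Mathlib

section
/- Let f = ∑_{n≥0} a(n)·Xⁿ be a formal power series with rational coefficients satisfying the algebraic equation X²·f² + (X−1)·f + 1 = 0. Then a(0) = 1, a(1) = 1, and for every integer n ≥ 2, (n+2)·a(n) = (2n+1)·a(n−1) + 3·(n−1)·a(n−2). (This is the generating-function equation of the Motzkin numbers, OEIS A001006.) -/
open PowerSeries

/-- The coefficient sequence of the power series solution of
X²·f² + (X−1)·f + 1 = 0 (the Motzkin numbers, OEIS A001006) satisfies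
a(0) = 1, a(1) = 1 and (n+2)·a(n) = (2n+1)·a(n−1) + 3·(n−1)·a(n−2) for n ≥ 2. -/
theorem motzkin_recurrence (f : PowerSeries ℚ)
    (hf : PowerSeries.X ^ 2 * f ^ 2 + (PowerSeries.X - 1) * f + 1 = 0) :
    PowerSeries.coeff 0 f = 1 ∧ PowerSeries.coeff 1 f = 1 ∧
      ∀ n : ℕ, 2 ≤ n →
        ((n : ℚ) + 2) * PowerSeries.coeff n f =
          (2 * (n : ℚ) + 1) * PowerSeries.coeff (n - 1) f +
            3 * ((n : ℚ) - 1) * PowerSeries.coeff (n - 2) f := by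
  set d : ℚ⟦X⟧ := PowerSeries.derivative ℚ f with hd
  have hf' : 2 * X * f ^ 2 + 2 * X ^ 2 * f * d + f + (X - 1) * d = 0 := by
    have h2 := congrArg (⇑(PowerSeries.derivative ℚ)) hf
    simp only [map_add, Derivation.leibniz, Derivation.leibniz_pow, derivative_X, map_sub,
      map_one, Derivation.map_one_eq_zero, smul_eq_mul, map_zero, ← hd] at h2
    linear_combination h2
  have key : X * d - C 2 * (X ^ 2 * d) - C 3 * (X ^ 3 * d)
      = C 3 * (X ^ 2 * f) + C 3 * (X * f) - C 2 * f + C 2 := by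
    have c2 : (C 2 : ℚ⟦X⟧) = 2 := map_ofNat _ _
    have c3 : (C 3 : ℚ⟦X⟧) = 3 := map_ofNat _ _
    rw [c2, c3]
    linear_combination (X * (2 * X ^ 2 * f + X - 1)) * hf'
      - (4 * X ^ 3 * d + 4 * X ^ 2 * f + 2) * hf
  have h0 : coeff 0 f = 1 := by
    have h := congrArg (⇑(constantCoeff)) hf
    simp only [map_add, map_mul, map_pow, map_sub, map_one, constantCoeff_X, map_zero] at h
    rw [coeff_zero_eq_constantCoeff]
    nlinarith [h]
  have h1 : coeff 1 f = 1 := by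
    have h := congrArg (⇑(coeff 1)) key
    have A1 : coeff 1 (X * d) = coeff 0 d := coeff_succ_X_mul 0 d
    have A2 : coeff 1 (X ^ 2 * d) = 0 := by rw [coeff_X_pow_mul']; norm_num
    have A3 : coeff 1 (X ^ 3 * d) = 0 := by rw [coeff_X_pow_mul']; norm_num
    have B2 : coeff 1 (X ^ 2 * f) = 0 := by rw [coeff_X_pow_mul']; norm_num
    have B1 : coeff 1 (X * f) = coeff 0 f := coeff_succ_X_mul 0 f
    simp only [map_add, map_sub, coeff_C_mul, coeff_C, A1, A2, A3, B2, B1] at h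
    simp only [coeff_derivative, hd] at h
    norm_num at h
    have h0' := h0
    rw [coeff_zero_eq_constantCoeff] at h0'
    linarith [h, h0']
  refine ⟨h0, h1, ?_⟩
  intro n hn
  rcases Nat.lt_or_ge n 3 with h3 | h3
  · obtain rfl : n = 2 := by omega
    have h := congrArg (⇑(coeff 2)) key
    have A1 : coeff 2 (X * d) = coeff 1 d := coeff_succ_X_mul 1 d
    have A2 : coeff 2 (X ^ 2 * d) = coeff 0 d := coeff_X_pow_mul d 2 0
    have A3 : coeff 2 (X ^ 3 * d) = 0 := by rw [coeff_X_pow_mul']; norm_num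
    have B2 : coeff 2 (X ^ 2 * f) = coeff 0 f := coeff_X_pow_mul f 2 0
    have B1 : coeff 2 (X * f) = coeff 1 f := coeff_succ_X_mul 1 f
    simp only [map_add, map_sub, coeff_C_mul, coeff_C, A1, A2, A3, B2, B1] at h
    simp only [coeff_derivative, hd] at h
    norm_num at h ⊢
    have h0' := h0
    have h1' := h1
    rw [coeff_zero_eq_constantCoeff] at h0'
    linarith [h, h0', h1']
  · obtain ⟨k, rfl⟩ : ∃ k, n = k + 3 := ⟨n - 3, by omega⟩
    have e1 : k + 3 - 1 = k + 2 := rfl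
    have e2 : k + 3 - 2 = k + 1 := rfl
    rw [e1, e2]
    have h := congrArg (⇑(coeff (k + 3))) key
    have A1 : coeff (k + 3) (X * d) = coeff (k + 2) d := coeff_succ_X_mul (k + 2) d
    have A2 : coeff (k + 3) (X ^ 2 * d) = coeff (k + 1) d := coeff_X_pow_mul d 2 (k + 1)
    have A3 : coeff (k + 3) (X ^ 3 * d) = coeff k d := coeff_X_pow_mul d 3 k
    have B2 : coeff (k + 3) (X ^ 2 * f) = coeff (k + 1) f := coeff_X_pow_mul f 2 (k + 1)
    have B1 : coeff (k + 3) (X * f) = coeff (k + 2) f := coeff_succ_X_mul (k + 2) f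
    have C0 : coeff (k + 3) (C 2) = 0 := by rw [coeff_C]; norm_num
    simp only [map_add, map_sub, coeff_C_mul, coeff_C, A1, A2, A3, B2, B1, C0] at h
    simp only [coeff_derivative, hd] at h
    push_cast at h ⊢
    ring_nf at h ⊢
    linarith [h]
end

section
/- Let f = ∑_{n≥0} a(n)·Xⁿ be a formal power series with rational coefficients satisfying X²·f² − (1 − X + X²)·f + 1 = 0. Then a(0) = 1, a(1) = 1, a(2) = 1, a(3) = 2, and for every integer n ≥ 4, (n+2)·a(n) = (2n+1)·a(n−1) + (n−1)·a(n−2) + (2n−5)·a(n−3) − (n−4)·a(n−4). (f is the generating function (1 − x + x² − √(1−2x−x²−2x³+x⁴))/(2x²) of OEIS A004148, conjectured by Somos, with recurrence conjectured by Mathar.) -/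
open PowerSeries


/-- The coefficient sequence of the power series solution of
X²·f² − (1 − X + X²)·f + 1 = 0 (OEIS A004148) satisfies
a(0)=1, a(1)=1, a(2)=1, a(3)=2 and, for n ≥ 4,
(n+2)·a(n) = (2n+1)·a(n−1) + (n−1)·a(n−2) + (2n−5)·a(n−3) − (n−4)·a(n−4). -/
theorem A004148_recurrence (f : PowerSeries ℚ)
    (hf : PowerSeries.X ^ 2 * f ^ 2 -
        (1 - PowerSeries.X + PowerSeries.X ^ 2) * f + 1 = 0) :
    PowerSeries.coeff 0 f = 1 ∧ PowerSeries.coeff 1 f = 1 ∧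
      PowerSeries.coeff 2 f = 1 ∧ PowerSeries.coeff 3 f = 2 ∧
      ∀ n : ℕ, 4 ≤ n →
        ((n : ℚ) + 2) * PowerSeries.coeff n f =
          (2 * (n : ℚ) + 1) * PowerSeries.coeff (n - 1) f +
            ((n : ℚ) - 1) * PowerSeries.coeff (n - 2) f +
            (2 * (n : ℚ) - 5) * PowerSeries.coeff (n - 3) f -
            ((n : ℚ) - 4) * PowerSeries.coeff (n - 4) f := by
  have h0 : coeff 0 f = 1 := by
    have := congrArg (coeff 0) hf
    simp [coeff_mul, pow_two, coeff_X_pow_mul'] at this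
    rw [coeff_zero_eq_constantCoeff]
    linarith [this]
  have h0c : constantCoeff f = 1 := by
    rw [← coeff_zero_eq_constantCoeff_apply]; exact h0
  have h1 : coeff 1 f = 1 := by
    have := congrArg (coeff 1) hf
    simp [coeff_mul, pow_two, Finset.Nat.sum_antidiagonal_eq_sum_range_succ_mk,
      Finset.sum_range_succ, coeff_X, h0c, h0] at this
    linarith [this]
  have h2 : coeff 2 f = 1 := by
    have := congrArg (coeff 2) hf
    simp [coeff_mul, pow_two, Finset.Nat.sum_antidiagonal_eq_sum_range_succ_mk,
      Finset.sum_range_succ, coeff_X, h0c, h0, h1] at this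
    linarith [this]
  have h3 : coeff 3 f = 2 := by
    have := congrArg (coeff 3) hf
    simp [coeff_mul, pow_two, Finset.Nat.sum_antidiagonal_eq_sum_range_succ_mk,
      Finset.sum_range_succ, coeff_X, h0c, h0, h1, h2] at this
    linarith [this]
  refine ⟨h0, h1, h2, h3, ?_⟩
  set f' := d⁄dX ℚ f with hf'def
  have hder : (2*X*f^2 + 2*X^2*f*f' + (1-2*X)*f - (1-X+X^2)*f' : ℚ⟦X⟧) = 0 := by
    have h := congrArg (d⁄dX ℚ) hf
    simp only [map_add, map_sub, map_one, map_mul, Derivation.leibniz, Derivation.leibniz_pow,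
      derivative_X, smul_eq_mul, map_zero, Derivation.map_one_eq_zero] at h
    linear_combination h
  have hD : (2*X^2*f - (1-X+X^2) : ℚ⟦X⟧) ≠ 0 := by
    intro h
    have := congrArg (constantCoeff) h
    simp at this
  have hDL : (2*X^2*f - (1-X+X^2)) *
      ((X - 2*X^2 - X^3 - 2*X^4 + X^5)*f' + (2 - 3*X - X^2 - X^3)*f - (2 - 2*X^2)) = 0 := by
    calc (2*X^2*f - (1-X+X^2)) *
        ((X - 2*X^2 - X^3 - 2*X^4 + X^5)*f' + (2 - 3*X - X^2 - X^3)*f - (2 - 2*X^2))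
        = (X - 2*X^2 - X^3 - 2*X^4 + X^5) *
            (2*X*f^2 + 2*X^2*f*f' + (1-2*X)*f - (1-X+X^2)*f')
          + (2 - 2*X + 2*X^3 - 2*X^4) * (X^2*f^2 - (1-X+X^2)*f + 1) := by ring
      _ = 0 := by rw [hder, hf]; ring
  have hL : ((X - 2*X^2 - X^3 - 2*X^4 + X^5)*f' + (2 - 3*X - X^2 - X^3)*f - (2 - 2*X^2) : ℚ⟦X⟧)
      = 0 := (mul_eq_zero.mp hDL).resolve_left hD
  have hE : (X^1*f' + X^5*f' + f + f + X^2 + X^2 : ℚ⟦X⟧) =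
      X^2*f' + X^2*f' + X^3*f' + X^4*f' + X^4*f' + X^1*f + X^1*f + X^1*f + X^2*f + X^3*f
        + 1 + 1 := by linear_combination hL
  have cf' : ∀ j : ℕ, coeff j f' = ((j:ℚ)+1) * coeff (j+1) f := by
    intro j; rw [hf'def, coeff_derivative]; ring
  intro n hn
  obtain ⟨m, rfl⟩ : ∃ m, n = m + 4 := ⟨n - 4, by omega⟩
  have hco := congrArg (coeff (m+4)) hE
  simp only [map_add, coeff_X_pow_mul', coeff_one, coeff_X_pow,
    eq_true (show 1 ≤ m+4 by omega), eq_true (show 2 ≤ m+4 by omega),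
    eq_true (show 3 ≤ m+4 by omega), eq_true (show 4 ≤ m+4 by omega),
    show m+4-1 = m+3 by omega, show m+4-2 = m+2 by omega, show m+4-3 = m+1 by omega,
    show m+4-4 = m by omega, eq_false (show ¬(m+4 = 2) by omega),
    eq_false (show ¬(m+4 = 0) by omega), if_true, if_false, add_zero] at hco
  rcases Nat.eq_zero_or_pos m with rfl | hm
  · norm_num [cf'] at hco ⊢
    linarith [hco]
  · obtain ⟨k, rfl⟩ : ∃ k, m = k + 1 := ⟨m - 1, by omega⟩
    simp only [eq_true (show 5 ≤ k+1+4 by omega), if_true,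
      show k+1+4-5 = k by omega] at hco
    simp only [cf'] at hco
    simp only [show (k:ℕ)+1+4 = k+5 by omega, show (k:ℕ)+1+4-1 = k+4 by omega,
      show (k:ℕ)+1+4-2 = k+3 by omega, show (k:ℕ)+1+4-3 = k+2 by omega,
      show (k:ℕ)+1+4-4 = k+1 by omega] at hco ⊢
    push_cast at hco ⊢
    linarith [hco]
end

section
/- Let f = ∑_{n≥0} a(n)·Xⁿ be a formal power series with rational coefficients satisfying (2 + X)·f² − (1 + 2X)·f + X = 0 and with a(0) = 0. Then a(1) = 1, a(2) = 0, and for every integer n ≥ 3, 2n·a(n) = (7n−12)·a(n−1) + 2·(2n−3)·a(n−2). (f is the generating function (1 − √(1−4x))/(3 − √(1−4x)) of the Fine numbers, OEIS A000957.) -/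
open PowerSeries

/-- The coefficient sequence of the power series solution of
(2 + X)·f² − (1 + 2X)·f + X = 0 with a(0) = 0 (the Fine numbers, OEIS A000957)
satisfies a(1) = 1, a(2) = 0, and 2n·a(n) = (7n−12)·a(n−1) + 2·(2n−3)·a(n−2)
for all n ≥ 3. -/
theorem fine_recurrence (f : PowerSeries ℚ)
    (hf : (2 + PowerSeries.X) * f ^ 2 - (1 + 2 * PowerSeries.X) * f +
        PowerSeries.X = 0)
    (h0 : PowerSeries.coeff 0 f = 0) :
    PowerSeries.coeff 1 f = 1 ∧ PowerSeries.coeff 2 f = 0 ∧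
      ∀ n : ℕ, 3 ≤ n →
        2 * (n : ℚ) * PowerSeries.coeff n f =
          (7 * (n : ℚ) - 12) * PowerSeries.coeff (n - 1) f +
            2 * (2 * (n : ℚ) - 3) * PowerSeries.coeff (n - 2) f := by
  -- low-order coefficients
  have hf' : (C (R := ℚ) 2 + X) * f ^ 2 - (C (R := ℚ) 1 + C (R := ℚ) 2 * X) * f + X = (0:ℚ⟦X⟧) := by
    rw [map_ofNat, map_one]; exact_mod_cast hf
  have e1 := congrArg (coeff 1) hf'
  have e2 := congrArg (coeff 2) hf'
  simp [coeff_mul, pow_two, Finset.Nat.sum_antidiagonal_eq_sum_range_succ_mk,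
    Finset.sum_range_succ, h0, coeff_C, coeff_X] at e1 e2
  have a1 : coeff 1 f = 1 := by linarith
  have a2 : coeff 2 f = 0 := by nlinarith [e1, e2]
  refine ⟨a1, a2, ?_⟩
  -- derivative of the functional equation
  set g := d⁄dX ℚ f with hgdef
  have h2 : (d⁄dX ℚ) (2:ℚ⟦X⟧) = 0 := by
    rw [← map_ofNat (C (R := ℚ)) 2]; exact derivative_C
  have hd : f^2 + 2*(2+X)*f*g - 2*f - (1+2*X)*g + 1 = 0 := by
    have h := congrArg (d⁄dX ℚ) hf
    simp only [map_sub, map_add, Derivation.leibniz, Derivation.leibniz_pow, derivative_X,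
      smul_eq_mul, map_zero, h2, Derivation.map_one_eq_zero] at h
    linear_combination h
  -- the linear ODE
  have hstar : (C (R := ℚ) 2) * g - (C (R := ℚ) 7) * (X * g) - (C (R := ℚ) 4) * (X^2 * g)
      + (C (R := ℚ) 5) * f - (C (R := ℚ) 2) * (X * f) + (C (R := ℚ) 2) * X - (C (R := ℚ) 2) * 1 = 0 := by
    rw [map_ofNat, map_ofNat, map_ofNat, map_ofNat]
    linear_combination ((2+X)*(-4*(2+X)*g) + (7+2*X) - 2*(2+X)*f) * hf
      + ((2+X)*(2*(2+X)*f - (1+2*X))) * hd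
  intro n hn
  obtain ⟨m, rfl⟩ : ∃ m, n = m + 3 := ⟨n - 3, by omega⟩
  have e := congrArg (coeff (m + 2)) hstar
  have hx2 : coeff (m + 2) (X^2 * g) = coeff m g := by
    have h := coeff_X_pow_mul g 2 m
    rwa [show m + 2 = m + 2 from rfl] at h
  simp only [map_sub, map_add, coeff_C_mul, coeff_succ_X_mul, hx2, coeff_derivative,
    map_zero, mul_one] at e
  have hX : coeff (m + 2) (X : ℚ⟦X⟧) = 0 := by
    rw [coeff_X]; simp
  have hC : coeff (m + 2) ((C (R := ℚ) 2 : ℚ⟦X⟧)) = 0 := by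
    rw [coeff_C]; simp
  rw [hX, hC] at e
  simp only [hgdef, coeff_derivative] at e
  have h1 : (m + 3 : ℕ) - 1 = m + 2 := by omega
  have h2' : (m + 3 : ℕ) - 2 = m + 1 := by omega
  rw [h1, h2']
  push_cast at e ⊢
  linear_combination e
end

section
/- Let f = ∑_{n≥0} a(n)·Xⁿ be a formal power series with rational coefficients satisfying X·f² − (1 − X)·f + 1 = 0. Then a(0) = 1, a(1) = 2, and for every integer n ≥ 2, (n+1)·a(n) = 3·(2n−1)·a(n−1) − (n−2)·a(n−2). (f is the generating function (1 − x − √(1−6x+x²))/(2x) of the large Schröder numbers, OEIS A006318.) -/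
open PowerSeries

/-- The coefficient sequence of the power series solution of
X·f² − (1 − X)·f + 1 = 0 (the large Schröder numbers, OEIS A006318) satisfies
a(0) = 1, a(1) = 2, and (n+1)·a(n) = 3·(2n−1)·a(n−1) − (n−2)·a(n−2) for n ≥ 2. -/
theorem large_schroeder_recurrence (f : PowerSeries ℚ)
    (hf : PowerSeries.X * f ^ 2 - (1 - PowerSeries.X) * f + 1 = 0) :
    PowerSeries.coeff 0 f = 1 ∧ PowerSeries.coeff 1 f = 2 ∧
      ∀ n : ℕ, 2 ≤ n →
        ((n : ℚ) + 1) * PowerSeries.coeff n f =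
          3 * (2 * (n : ℚ) - 1) * PowerSeries.coeff (n - 1) f -
            ((n : ℚ) - 2) * PowerSeries.coeff (n - 2) f := by
  set f' := d⁄dX ℚ f with hf'
  have h0 : PowerSeries.coeff 0 f = 1 := by
    have h := congrArg (PowerSeries.constantCoeff) hf
    simp [map_sub, map_mul, map_pow] at h
    rw [coeff_zero_eq_constantCoeff]
    linarith
  have hc0 : PowerSeries.constantCoeff f = 1 := by
    rw [← coeff_zero_eq_constantCoeff]; exact h0
  have h1 : PowerSeries.coeff 1 f = 2 := by
    have h := congrArg (PowerSeries.coeff 1) hf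
    rw [map_add, map_sub, map_zero] at h
    have a : PowerSeries.coeff 1 (PowerSeries.X * f ^ 2) = 1 := by
      rw [show (1 : ℕ) = 0 + 1 from rfl, coeff_succ_X_mul,
        coeff_zero_eq_constantCoeff, map_pow, hc0, one_pow]
    have b : PowerSeries.coeff 1 ((1 - PowerSeries.X) * f) =
        PowerSeries.coeff 1 f - PowerSeries.coeff 0 f := by
      rw [sub_mul, one_mul, map_sub, show (1 : ℕ) = 0 + 1 from rfl, coeff_succ_X_mul]
    rw [a, b, h0] at h
    simp [PowerSeries.coeff_one] at h
    linarith
  refine ⟨h0, h1, ?_⟩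
  -- differentiate the equation
  have hD : f ^ 2 + 2 * PowerSeries.X * f * f' + f - (1 - PowerSeries.X) * f' = 0 := by
    have h := congrArg (d⁄dX ℚ) hf
    rw [map_add, map_sub, Derivation.leibniz, Derivation.leibniz] at h
    simp only [derivative_X, map_one, Derivation.map_one_eq_zero, map_sub, map_zero,
      smul_eq_mul, ← hf'] at h
    have hsq : d⁄dX ℚ (f ^ 2) = 2 * f * f' := by
      simp only [pow_two, Derivation.leibniz, smul_eq_mul, ← hf']; ring
    rw [hsq] at h
    linear_combination h
  -- the linear ODE
  have key : (1 - 6 * PowerSeries.X + PowerSeries.X ^ 2) * (PowerSeries.X * f') =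
      3 * PowerSeries.X * f - f + 1 + PowerSeries.X := by
    linear_combination (PowerSeries.X * (2 * PowerSeries.X * f - 1 + PowerSeries.X)) * hD +
      (-1 - PowerSeries.X - 2 * PowerSeries.X * f - 4 * PowerSeries.X ^ 2 * f') * hf
  -- coefficient of X*f'
  have hu : ∀ k : ℕ, PowerSeries.coeff k (PowerSeries.X * f') =
      (k : ℚ) * PowerSeries.coeff k f := by
    intro k
    cases k with
    | zero => simp [coeff_zero_eq_constantCoeff]
    | succ k => rw [PowerSeries.coeff_succ_X_mul, coeff_derivative]; push_cast; ring
  intro n hn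
  obtain ⟨m, rfl⟩ : ∃ m, n = m + 2 := ⟨n - 2, by omega⟩
  have h := congrArg (PowerSeries.coeff (m + 2)) key
  rw [add_mul, sub_mul, one_mul] at h
  have e1 : PowerSeries.coeff (m + 2) (6 * PowerSeries.X * (PowerSeries.X * f')) =
      6 * PowerSeries.coeff (m + 1) (PowerSeries.X * f') := by
    rw [mul_assoc, ← map_ofNat (PowerSeries.C) 6, PowerSeries.coeff_C_mul,
      show m + 2 = (m + 1) + 1 from rfl, PowerSeries.coeff_succ_X_mul]
  have e2 : PowerSeries.coeff (m + 2) (PowerSeries.X ^ 2 * (PowerSeries.X * f')) =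
      PowerSeries.coeff m (PowerSeries.X * f') := by
    rw [PowerSeries.coeff_X_pow_mul]
  have e3 : PowerSeries.coeff (m + 2) (3 * PowerSeries.X * f) =
      3 * PowerSeries.coeff (m + 1) f := by
    rw [mul_assoc, ← map_ofNat (PowerSeries.C) 3, PowerSeries.coeff_C_mul,
      show m + 2 = (m + 1) + 1 from rfl, PowerSeries.coeff_succ_X_mul]
  simp only [map_add, map_sub] at h
  rw [e1, e2, e3, hu, hu, hu,
    PowerSeries.coeff_one, PowerSeries.coeff_X] at h
  simp only [show m + 2 ≠ 0 by omega, show ¬(m + 2 = 1) by omega, if_false] at h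
  simp only [show m + 2 - 1 = m + 1 from rfl, show m + 2 - 2 = m from rfl]
  push_cast at h ⊢
  linarith
end

section
/- Let f = ∑_{n≥0} a(n)·Xⁿ be a formal power series with rational coefficients satisfying 2X·f² − (1 + X)·f + 1 = 0. Then a(0) = 1, a(1) = 1, and for every integer n ≥ 2, (n+1)·a(n) = 3·(2n−1)·a(n−1) − (n−2)·a(n−2). (f is the generating function (1 + x − √(1−6x+x²))/(4x) of the little Schröder / super-Catalan numbers, OEIS A001003.) -/
open PowerSeries

private lemma aux_deriv_ofNat (n : ℕ) [n.AtLeastTwo] :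
    d⁄dX ℚ (no_index (OfNat.ofNat n) : ℚ⟦X⟧) = 0 := by
  rw [← map_ofNat C n, derivative_C]

/-- The coefficient sequence of the power series solution of
2X·f² − (1 + X)·f + 1 = 0 (the little Schröder numbers, OEIS A001003) satisfies
a(0) = 1, a(1) = 1, and (n+1)·a(n) = 3·(2n−1)·a(n−1) − (n−2)·a(n−2) for n ≥ 2. -/
theorem little_schroeder_recurrence (f : PowerSeries ℚ)
    (hf : 2 * PowerSeries.X * f ^ 2 - (1 + PowerSeries.X) * f + 1 = 0) :
    PowerSeries.coeff 0 f = 1 ∧ PowerSeries.coeff 1 f = 1 ∧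
      ∀ n : ℕ, 2 ≤ n →
        ((n : ℚ) + 1) * PowerSeries.coeff n f =
          3 * (2 * (n : ℚ) - 1) * PowerSeries.coeff (n - 1) f -
            ((n : ℚ) - 2) * PowerSeries.coeff (n - 2) f := by
  set g : ℚ⟦X⟧ := 4 * (X * f) - 1 - X with hgdef
  have hg : g ^ 2 = 1 - 6 * X + X ^ 2 := by
    rw [hgdef]; linear_combination (8 * X : ℚ⟦X⟧) * hf
  have hD := congrArg (d⁄dX ℚ) hg
  simp only [pow_two, Derivation.leibniz, smul_eq_mul, map_sub, map_add,
    derivative_X, aux_deriv_ofNat, Derivation.map_one_eq_zero] at hD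
  have hGG : g * d⁄dX ℚ g = X - 3 := by
    apply mul_left_cancel₀ (show (2:ℚ⟦X⟧) ≠ 0 by
      intro h
      have h0 := congrArg (constantCoeff) h
      rw [map_ofNat] at h0; norm_num at h0)
    linear_combination hD
  have hODE : (1 - 6 * X + X ^ 2) * d⁄dX ℚ g = (X - 3) * g := by
    linear_combination g * hGG - (d⁄dX ℚ g) * hg
  have hDg : d⁄dX ℚ g = 4 * f + 4 * (X * d⁄dX ℚ f) - 1 := by
    rw [hgdef]
    simp only [map_sub, Derivation.leibniz, smul_eq_mul, derivative_X,
      aux_deriv_ofNat, Derivation.map_one_eq_zero]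
    ring
  rw [hDg, hgdef] at hODE
  set T : ℚ⟦X⟧ := X * d⁄dX ℚ f with hTdef
  set U : ℚ⟦X⟧ := X * T with hUdef
  have hE4 : (4:ℚ) • f - (12:ℚ) • (X * f) + (4:ℚ) • T - (24:ℚ) • U
      + (4:ℚ) • (X * U) - (4:ℚ) • (1:ℚ⟦X⟧) + (4:ℚ) • X = 0 := by
    simp only [smul_eq_C_mul, map_ofNat]
    rw [hUdef, hTdef]
    linear_combination hODE
  -- coefficients of T
  have hT : ∀ k : ℕ, coeff k T = (k : ℚ) * coeff k f := by
    intro k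
    cases k with
    | zero => simp [hTdef, coeff_zero_eq_constantCoeff, map_mul]
    | succ k =>
        rw [hTdef, coeff_succ_X_mul, coeff_derivative]
        push_cast; ring
  -- constant coefficient
  have hb0 : coeff 0 f = 1 := by
    have h0 := congrArg (constantCoeff) hf
    simp only [map_sub, map_add, map_mul, map_one, map_pow, constantCoeff_X,
      map_zero, map_ofNat] at h0
    have : -(constantCoeff) f + 1 = 0 := by linear_combination h0
    rw [coeff_zero_eq_constantCoeff]; linarith
  -- coefficient 1 via hE4
  have hb1 : coeff 1 f = 1 := by
    have h1 := congrArg (coeff 1) hE4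
    simp only [map_sub, map_add, map_smul, smul_eq_mul, map_zero, coeff_one,
      coeff_X, hT] at h1
    rw [hUdef] at h1
    simp only [coeff_succ_X_mul, hT, map_zero, coeff_one, coeff_X,
      coeff_zero_eq_constantCoeff, map_mul, constantCoeff_X, zero_mul, hb0,
      ← coeff_zero_eq_constantCoeff] at h1
    norm_num at h1
    linarith
  refine ⟨hb0, hb1, ?_⟩
  intro n hn
  obtain ⟨m, rfl⟩ := Nat.exists_eq_add_of_le hn
  have hm2 := congrArg (coeff (m + 2)) hE4
  simp only [map_sub, map_add, map_smul, smul_eq_mul, coeff_one, coeff_X, hT] at hm2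
  rw [hUdef] at hm2
  simp only [coeff_succ_X_mul, hT, map_zero] at hm2
  norm_num at hm2
  rw [show 2 + m - 1 = m + 1 from by omega, show 2 + m - 2 = m from by omega,
    show 2 + m = m + 2 from by omega]
  push_cast at hm2 ⊢
  linear_combination hm2 / 4
end

section
/- Let f = ∑_{n≥0} a(n)·Xⁿ be a formal power series with rational coefficients satisfying X·(1 + X)·f² − (1 + X)·f + 1 = 0. Then a(0) = 1, a(1) = 0, and for every integer n ≥ 2, (n+1)·a(n) = (n−1)·(2·a(n−1) + 3·a(n−2)). (f is the generating function (1 + x − √(1−2x−3x²))/(2x(1+x)) of the Riordan numbers, OEIS A005043.) -/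
open PowerSeries

/-- The coefficient sequence of the power series solution of
X·(1+X)·f² − (1+X)·f + 1 = 0 (the Riordan numbers, OEIS A005043) satisfies
a(0) = 1, a(1) = 0, and (n+1)·a(n) = (n−1)·(2·a(n−1) + 3·a(n−2)) for n ≥ 2. -/
theorem riordan_recurrence (f : PowerSeries ℚ)
    (hf : PowerSeries.X * (1 + PowerSeries.X) * f ^ 2 -
        (1 + PowerSeries.X) * f + 1 = 0) :
    PowerSeries.coeff 0 f = 1 ∧ PowerSeries.coeff 1 f = 0 ∧
      ∀ n : ℕ, 2 ≤ n →
        ((n : ℚ) + 1) * PowerSeries.coeff n f =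
          ((n : ℚ) - 1) *
            (2 * PowerSeries.coeff (n - 1) f +
              3 * PowerSeries.coeff (n - 2) f) := by
  set X : ℚ⟦X⟧ := PowerSeries.X with hX
  set D : ℚ⟦X⟧ := d⁄dX ℚ f with hDdef
  have hg2 : (X*(1+X)*f + X*(1+X)*f - (1+X)) * (X*(1+X)*f + X*(1+X)*f - (1+X))
      = 1 - (X + X) - (X*X + X*X + X*X) := by
    linear_combination (4*X*(1+X)) * hf
  have hdg2 := congrArg (⇑(d⁄dX ℚ)) hg2
  have hdX : d⁄dX ℚ X = 1 := derivative_X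
  simp only [map_sub, map_add, Derivation.leibniz, hdX, smul_eq_mul,
    Derivation.map_one_eq_zero, mul_one, one_mul, mul_zero, zero_mul, add_zero, zero_add,
    ← hDdef] at hdg2
  have key : (4*(1+X)) * (X*(1-2*X-3*X^2)*D + (1-3*X^2)*f - 1) = 0 := by
    linear_combination (-(2*(2*(1+2*X)*f + 2*(X+X^2)*D - 1)))*hg2
      + (X*(1+X)*f + X*(1+X)*f - (1+X))*hdg2
  have h4ne : (4*(1+X) : ℚ⟦X⟧) ≠ 0 := by
    intro h
    have := congrArg (constantCoeff) h
    simp [map_ofNat, show constantCoeff X = 0 from constantCoeff_X] at this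
  have hB : X*(1-2*X-3*X^2)*D + (1-3*X^2)*f - 1 = 0 :=
    (mul_eq_zero.mp key).resolve_left h4ne
  have hT : X*D + f = 1 + (X^2*D + X^2*D) + (X^3*D + X^3*D + X^3*D)
      + (X^2*f + X^2*f + X^2*f) := by
    linear_combination hB
  -- coefficient of derivative
  have hDc : ∀ n : ℕ, coeff n D = coeff (n+1) f * (n+1) := by
    intro n; rw [hDdef, coeff_derivative]
  -- a₀ = 1
  have h0 : coeff 0 f = 1 := by
    have h := congrArg (constantCoeff) hf
    have hc0 : constantCoeff X = 0 := constantCoeff_X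
    simp only [map_sub, map_add, map_mul, map_pow, map_one, map_zero, hc0, zero_mul,
      mul_zero, zero_sub, add_zero, zero_add, one_mul] at h
    rw [coeff_zero_eq_constantCoeff]
    linarith [h]
  refine ⟨h0, ?_, ?_⟩
  · -- a₁ = 0
    have h1 := congrArg (coeff 1) hT
    have f1 : coeff 1 (X*D) = coeff 0 D := coeff_succ_X_mul 0 D
    have f2 : coeff 1 (X^2*D) = 0 := by rw [coeff_X_pow_mul']; norm_num
    have f3 : coeff 1 (X^3*D) = 0 := by rw [coeff_X_pow_mul']; norm_num
    have f2f : coeff 1 (X^2*f) = 0 := by rw [coeff_X_pow_mul']; norm_num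
    simp only [map_add, f1, f2, f3, f2f, coeff_one, hDc] at h1
    norm_num at h1
    linarith [h1]
  · intro n hn
    obtain ⟨m, rfl⟩ : ∃ m, n = m + 2 := ⟨n - 2, by omega⟩
    have hc := congrArg (coeff (m+2)) hT
    have e1 : coeff (m+2) (X*D) = coeff (m+1) D := coeff_succ_X_mul (m+1) D
    have e2 : coeff (m+2) (X^2*D) = coeff m D := coeff_X_pow_mul D 2 m
    have e2f : coeff (m+2) (X^2*f) = coeff m f := coeff_X_pow_mul f 2 m
    simp only [map_add, e1, e2, e2f, coeff_one] at hc
    norm_num at hc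
    have hsub1 : m + 2 - 1 = m + 1 := by omega
    have hsub2 : m + 2 - 2 = m := by omega
    rw [hsub1, hsub2]
    cases m with
    | zero =>
      have e3 : coeff (0+2) (X^3*D) = 0 := by
        rw [coeff_X_pow_mul']
        norm_num
      rw [e3] at hc
      simp only [hDc] at hc
      norm_num at hc
      rw [coeff_zero_eq_constantCoeff]
      push_cast at hc ⊢
      linear_combination hc
    | succ k =>
      have e3 : coeff (k+1+2) (X^3*D) = coeff k D := by
        have := coeff_X_pow_mul D 3 k
        convert this using 2
      rw [e3] at hc
      simp only [hDc] at hc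
      push_cast at hc ⊢
      linear_combination hc
end

section
/- Let f = ∑_{n≥0} a(n)·Xⁿ be a formal power series with rational coefficients satisfying (1 − 2X − 3X²)·f² = 1 and a(0) = 1. Then a(1) = 1 and for every integer n ≥ 2, n·a(n) = (2n−1)·a(n−1) + 3·(n−1)·a(n−2). (f is the generating function 1/√(1−2x−3x²) of the central trinomial coefficients, OEIS A002426.) -/
open PowerSeries

/-- The coefficient sequence of the power series f with (1 − 2X − 3X²)·f² = 1
and a(0) = 1 (the central trinomial coefficients, OEIS A002426) satisfies
a(1) = 1 and n·a(n) = (2n−1)·a(n−1) + 3·(n−1)·a(n−2) for all n ≥ 2. -/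
theorem central_trinomial_recurrence (f : PowerSeries ℚ)
    (hf : (1 - 2 * PowerSeries.X - 3 * PowerSeries.X ^ 2) * f ^ 2 = 1)
    (h0 : PowerSeries.coeff 0 f = 1) :
    PowerSeries.coeff 1 f = 1 ∧
      ∀ n : ℕ, 2 ≤ n →
        (n : ℚ) * PowerSeries.coeff n f =
          (2 * (n : ℚ) - 1) * PowerSeries.coeff (n - 1) f +
            3 * ((n : ℚ) - 1) * PowerSeries.coeff (n - 2) f := by
  -- Step 1: differentiate the functional equation
  have key : (2:ℚ⟦X⟧) * f * ((1 - 2*X - 3*X^2) * d⁄dX ℚ f - (1+3*X) * f) = 0 := by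
    have hD := congrArg (d⁄dX ℚ) hf
    have h2 : (2:ℚ⟦X⟧) = ((2:ℕ):ℚ⟦X⟧) := by norm_num
    have h3 : (3:ℚ⟦X⟧) = ((3:ℕ):ℚ⟦X⟧) := by norm_num
    rw [h2, h3] at hD
    simp only [Derivation.leibniz, Derivation.leibniz_pow, map_sub, derivative_X,
      Derivation.map_one_eq_zero, Derivation.map_natCast, smul_eq_mul, nsmul_eq_mul] at hD
    rw [h2, h3]
    linear_combination hD
  -- Step 2: cancel the nonzero factor 2*f
  have hfne : f ≠ 0 := by
    intro h
    rw [h] at h0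
    simp at h0
  have h2ne : (2:ℚ⟦X⟧) ≠ 0 := by
    intro h
    have h' := congrArg (coeff 0) h
    rw [(map_ofNat (C (R := ℚ)) 2).symm, coeff_zero_C, map_zero] at h'
    norm_num at h'
  have h2fne : (2:ℚ⟦X⟧) * f ≠ 0 := mul_ne_zero h2ne hfne
  have E : (1 - 2*X - 3*X^2) * d⁄dX ℚ f = (1+3*X) * f := by
    rcases mul_eq_zero.mp key with h | h
    · exact absurd h h2fne
    · exact sub_eq_zero.mp h
  -- Step 3: set g = X * f' so that coeff n g = n * coeff n f
  set g : ℚ⟦X⟧ := X * d⁄dX ℚ f with hgdef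
  have hg : ∀ n : ℕ, coeff n g = (n : ℚ) * coeff n f := by
    intro n
    cases n with
    | zero => simp [hgdef]
    | succ m =>
      rw [hgdef, coeff_succ_X_mul, coeff_derivative]
      push_cast
      ring
  have E2 : g = 2*(X*g) + 3*(X^2*g) + X*f + 3*(X^2*f) := by
    rw [hgdef]
    linear_combination X * E
  have c2 : ∀ (p : ℚ⟦X⟧) (k : ℕ), coeff k (2 * p) = 2 * coeff k p := by
    intro p k
    rw [(map_ofNat (C (R := ℚ)) 2).symm, coeff_C_mul]
  have c3 : ∀ (p : ℚ⟦X⟧) (k : ℕ), coeff k (3 * p) = 3 * coeff k p := by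
    intro p k
    rw [(map_ofNat (C (R := ℚ)) 3).symm, coeff_C_mul]
  constructor
  · have h1 := congrArg (coeff 1) E2
    rw [hg 1] at h1
    simp only [map_add, c2, c3] at h1
    rw [show (1:ℕ) = 0 + 1 from rfl, coeff_succ_X_mul 0 g, coeff_succ_X_mul 0 f,
      coeff_X_pow_mul' g 2 (0+1), coeff_X_pow_mul' f 2 (0+1), hg 0] at h1
    norm_num [h0] at h1
    exact h1
  · intro n hn
    obtain ⟨m, rfl⟩ := Nat.exists_eq_add_of_le' hn
    have h1 := congrArg (coeff (m + 2)) E2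
    rw [hg (m+2)] at h1
    simp only [map_add, c2, c3] at h1
    rw [show m + 2 = (m+1) + 1 from rfl, coeff_succ_X_mul (m+1) g, coeff_succ_X_mul (m+1) f,
      show (m+1) + 1 = m + 2 from rfl, coeff_X_pow_mul g 2 m, coeff_X_pow_mul f 2 m,
      hg (m+1), hg m] at h1
    have e1 : m + 2 - 1 = m + 1 := rfl
    have e2 : m + 2 - 2 = m := rfl
    rw [e1, e2]
    push_cast at h1 ⊢
    linear_combination h1
end

section
/- Let f = ∑_{n≥0} a(n)·Xⁿ be a formal power series with rational coefficients satisfying (1 − 6X + X²)·f² = 1 and a(0) = 1. Then a(1) = 3 and for every integer n ≥ 2, n·a(n) = 3·(2n−1)·a(n−1) − (n−1)·a(n−2). (f is the generating function 1/√(1−6x+x²) of the central Delannoy numbers, OEIS A001850.) -/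
open PowerSeries

/-- The coefficient sequence of the power series f with (1 − 6X + X²)·f² = 1
and a(0) = 1 (the central Delannoy numbers, OEIS A001850) satisfies
a(1) = 3 and n·a(n) = 3·(2n−1)·a(n−1) − (n−1)·a(n−2) for all n ≥ 2. -/
theorem central_delannoy_recurrence (f : PowerSeries ℚ)
    (hf : (1 - 6 * PowerSeries.X + PowerSeries.X ^ 2) * f ^ 2 = 1)
    (h0 : PowerSeries.coeff 0 f = 1) :
    PowerSeries.coeff 1 f = 3 ∧
      ∀ n : ℕ, 2 ≤ n →
        (n : ℚ) * PowerSeries.coeff n f =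
          3 * (2 * (n : ℚ) - 1) * PowerSeries.coeff (n - 1) f -
            ((n : ℚ) - 1) * PowerSeries.coeff (n - 2) f := by
  have hD6 : (d⁄dX ℚ) (6 : ℚ⟦X⟧) = 0 := by
    rw [show (6:ℚ⟦X⟧) = ((6:ℕ):ℚ⟦X⟧) by norm_num]
    exact Derivation.map_natCast _ 6
  have hd : (d⁄dX ℚ) ((1 - 6 * X + X ^ 2) * f ^ 2) = 0 := by
    rw [hf]; exact Derivation.map_one_eq_zero _
  simp only [Derivation.leibniz, Derivation.leibniz_pow, map_sub, map_add,
    Derivation.map_one_eq_zero, hD6, derivative_X, smul_eq_mul, nsmul_eq_mul,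
    pow_one, mul_one, mul_zero, zero_sub, Nat.cast_ofNat] at hd
  have hfne : f ≠ 0 := fun h => by simp [h] at h0
  have key : f * (2 * ((1 - 6*X + X^2) * (d⁄dX ℚ) f - (3 - X) * f)) = 0 := by
    linear_combination hd
  have h1 : (1 - 6*X + X^2) * (d⁄dX ℚ) f = (3 - X) * f := by
    rcases mul_eq_zero.mp key with h | h
    · exact absurd h hfne
    · rcases mul_eq_zero.mp h with h | h
      · have h2 := congrArg (constantCoeff) h
        rw [map_ofNat, map_zero] at h2
        norm_num at h2
      · exact sub_eq_zero.mp h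
  have h2 : ∀ k : ℕ, coeff k ((d⁄dX ℚ) f) - 6 * coeff k (X * (d⁄dX ℚ) f)
      + coeff k (X * (X * (d⁄dX ℚ) f)) = 3 * coeff k f - coeff k (X * f) := by
    intro k
    have h3 := congrArg (coeff k) h1
    rw [show (1 - 6*X + X^2) * (d⁄dX ℚ) f
        = (d⁄dX ℚ) f - C 6 * (X * (d⁄dX ℚ) f) + X*(X*(d⁄dX ℚ) f) by
          rw [map_ofNat]; ring,
      show (3 - X)*f = C 3 * f - X*f by rw [map_ofNat]; ring] at h3
    simpa [coeff_C_mul] using h3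
  constructor
  · have := h2 0
    simp [coeff_derivative, coeff_zero_X_mul, ← coeff_zero_eq_constantCoeff, h0] at this
    linarith
  · intro n hn
    obtain ⟨k, rfl⟩ : ∃ k, n = k + 2 := ⟨n - 2, by omega⟩
    cases k with
    | zero =>
      have := h2 1
      simp [coeff_derivative, coeff_succ_X_mul, coeff_zero_X_mul] at this
      norm_num
      linarith
    | succ j =>
      have := h2 (j + 2)
      simp only [coeff_derivative, coeff_succ_X_mul] at this
      have e1 : j + 1 + 2 - 1 = j + 2 := by omega
      have e2 : j + 1 + 2 - 2 = j + 1 := by omega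
      rw [e1, e2]
      push_cast at this ⊢
      linarith
end

section
/- If f ∈ ℚ⟦X⟧ is an algebraic formal power series, i.e. there exist an integer A ≥ 1 and polynomials p₀(X), …, p_A(X) ∈ ℚ[X], not all zero, with ∑_{i=0}^{A} pᵢ(X)·fⁱ = 0 in ℚ⟦X⟧, then f satisfies a nontrivial linear differential equation with polynomial coefficients: there exist an integer L ≥ 0 and polynomials q₀(X), …, q_L(X) ∈ ℚ[X], not all zero, such that ∑_{i=0}^{L} qᵢ(X)·f⁽ⁱ⁾ = 0 in ℚ⟦X⟧, where f⁽ⁱ⁾ denotes the i-th formal derivative of f. -/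
open Polynomial PowerSeries
set_option maxHeartbeats 1000000

noncomputable section AlgToDiff

/-- coefficient-wise derivative of a polynomial in `ℚ[X][Y]` (derivative w.r.t. inner `X`). -/
def dXc (Q : Polynomial (Polynomial ℚ)) : Polynomial (Polynomial ℚ) :=
  Q.sum fun n a => Polynomial.C (Polynomial.derivative a) * Polynomial.X ^ n

lemma dXc_add (Q R : Polynomial (Polynomial ℚ)) : dXc (Q + R) = dXc Q + dXc R := by
  unfold dXc
  apply Polynomial.sum_add_index <;> intros <;> simp [add_mul]

lemma dXc_monomial (n : ℕ) (a : Polynomial ℚ) :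
    dXc (Polynomial.monomial n a) = Polynomial.monomial n (Polynomial.derivative a) := by
  unfold dXc
  rw [Polynomial.sum_monomial_index] <;> simp [Polynomial.C_mul_X_pow_eq_monomial]

lemma dXc_C (a : Polynomial ℚ) : dXc (Polynomial.C a) = Polynomial.C (Polynomial.derivative a) := by
  simpa [Polynomial.monomial_zero_left] using dXc_monomial 0 a

lemma dXc_C_mul_X_pow (a : Polynomial ℚ) (n : ℕ) :
    dXc (Polynomial.C a * Polynomial.X ^ n)
      = Polynomial.C (Polynomial.derivative a) * Polynomial.X ^ n := by
  rw [Polynomial.C_mul_X_pow_eq_monomial, Polynomial.C_mul_X_pow_eq_monomial, dXc_monomial]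

/-- evaluation `ℚ[X][Y] → ℚ⟦X⟧`, `X ↦ X`, `Y ↦ f`. -/
def phi (f : PowerSeries ℚ) : Polynomial (Polynomial ℚ) →+* PowerSeries ℚ :=
  Polynomial.eval₂RingHom (Polynomial.coeToPowerSeries.ringHom) f

lemma phi_C (f : PowerSeries ℚ) (a : Polynomial ℚ) : phi f (Polynomial.C a) = (a : PowerSeries ℚ) := by
  simp [phi, Polynomial.coeToPowerSeries.ringHom_apply]

lemma phi_X (f : PowerSeries ℚ) : phi f Polynomial.X = f := by simp [phi]

/-- chain rule -/
lemma deriv_phi (f : PowerSeries ℚ) (Q : Polynomial (Polynomial ℚ)) :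
    PowerSeries.derivativeFun (phi f Q)
      = phi f (dXc Q) + phi f (Polynomial.derivative Q) * PowerSeries.derivativeFun f := by
  induction Q using Polynomial.induction_on with
  | C a => simp [phi_C, dXc_C]; exact PowerSeries.derivative_coe a
  | add q r hq hr =>
      rw [map_add, PowerSeries.derivativeFun_add, hq, hr, dXc_add, map_add, map_add, map_add]
      ring
  | monomial n a ih =>
      rw [dXc_C_mul_X_pow] at ih ⊢
      rw [Polynomial.derivative_C_mul, Polynomial.derivative_X_pow] at ih ⊢
      rw [show (Polynomial.C a * Polynomial.X ^ (n+1) : Polynomial (Polynomial ℚ))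
            = Polynomial.C a * Polynomial.X ^ n * Polynomial.X from by ring,
        map_mul (phi f), phi_X, PowerSeries.derivativeFun_mul, ih]
      push_cast
      rw [smul_eq_mul, smul_eq_mul]
      simp only [map_mul, map_add, map_pow, map_natCast, phi_X, phi_C]
      cases n with
      | zero => push_cast; ring
      | succ m => simp only [Nat.add_sub_cancel]; push_cast; ring

lemma derivativeFun_eq (h : PowerSeries ℚ) :
    PowerSeries.derivativeFun h = PowerSeries.derivative (R := ℚ) h := rfl

lemma base_identity (f : PowerSeries ℚ) (P : Polynomial (Polynomial ℚ)) (hP : phi f P = 0) :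
    PowerSeries.derivativeFun f * phi f (Polynomial.derivative P) = - phi f (dXc P) := by
  have h := deriv_phi f P
  rw [hP, derivativeFun_eq, map_zero] at h
  linear_combination -h

lemma ind_family (f : PowerSeries ℚ) (P : Polynomial (Polynomial ℚ)) (hP : phi f P = 0) (i : ℕ) :
    ∃ Q : Polynomial (Polynomial ℚ),
      (phi f (Polynomial.derivative P)) ^ (2*i) * (PowerSeries.derivativeFun^[i] f) = phi f Q := by
  set D := Polynomial.derivative P with hD
  set g := phi f D with hg
  have hfg : PowerSeries.derivativeFun f * g = - phi f (dXc P) := base_identity f P hP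
  have hS : PowerSeries.derivativeFun g * g
      = phi f (dXc D) * phi f D - phi f (Polynomial.derivative D) * phi f (dXc P) := by
    rw [deriv_phi f D]
    linear_combination (phi f (Polynomial.derivative D)) * hfg
  induction i with
  | zero => exact ⟨Polynomial.X, by simp [phi_X]⟩
  | succ i ih =>
      obtain ⟨Q, hQ⟩ := ih
      refine ⟨D^2 * dXc Q - Polynomial.derivative Q * dXc P * D
        - Polynomial.C (Polynomial.C ((2*i : ℕ) : ℚ))
            * ((dXc D * D - Polynomial.derivative D * dXc P) * Q), ?_⟩
      have hd := congrArg PowerSeries.derivativeFun hQ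
      rw [PowerSeries.derivativeFun_mul, deriv_phi f Q, smul_eq_mul, smul_eq_mul] at hd
      have hpow : g * PowerSeries.derivativeFun (g ^ (2*i))
          = ((2*i : ℕ) : PowerSeries ℚ) * (g ^ (2*i) * PowerSeries.derivativeFun g) := by
        rw [derivativeFun_eq, Derivation.leibniz_pow, smul_eq_mul, nsmul_eq_mul, ← derivativeFun_eq]
        cases h2 : 2*i with
        | zero => simp
        | succ m => push_cast; ring
      rw [Function.iterate_succ_apply']
      simp only [map_sub, map_mul, map_pow]
      have hc : (phi f) (Polynomial.C (Polynomial.C ((2*i : ℕ) : ℚ)))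
          = ((2*i : ℕ) : PowerSeries ℚ) := by
        rw [phi_C, Polynomial.coe_C, map_natCast]
      rw [hc, show 2*(i+1) = 2*i + 2 by ring, pow_add]
      linear_combination g^2 * hd - g * (PowerSeries.derivativeFun^[i] f) * hpow
        - (((2*i : ℕ) : PowerSeries ℚ) * g * PowerSeries.derivativeFun g) * hQ
        - (((2*i : ℕ) : PowerSeries ℚ) * phi f Q) * hS
        + (g * phi f (Polynomial.derivative Q)) * hfg

lemma phi_kill_of_dvd (f : PowerSeries ℚ) (P W : Polynomial (Polynomial ℚ))
    (hP : phi f P = 0)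
    (hdvd : (P.map (algebraMap (Polynomial ℚ) (RatFunc ℚ)))
        ∣ (W.map (algebraMap (Polynomial ℚ) (RatFunc ℚ)))) :
    phi f W = 0 := by
  obtain ⟨T, hT⟩ := hdvd
  obtain ⟨b, hb⟩ := IsLocalization.integerNormalization_map_to_map
    (nonZeroDivisors (Polynomial ℚ)) T
  set N := IsLocalization.integerNormalization (nonZeroDivisors (Polynomial ℚ)) T with hN
  have halginj : Function.Injective (algebraMap (Polynomial ℚ) (RatFunc ℚ)) :=
    IsFractionRing.injective _ _
  have hmain : Polynomial.C (b : Polynomial ℚ) * W = P * N := by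
    apply Polynomial.map_injective (algebraMap (Polynomial ℚ) (RatFunc ℚ)) halginj
    rw [Polynomial.map_mul, Polynomial.map_mul, Polynomial.map_C, hb, hT,
      Algebra.smul_def, Polynomial.algebraMap_apply]
    ring
  have := congrArg (phi f) hmain
  rw [map_mul, map_mul, hP, zero_mul, phi_C] at this
  have hbne : ((b : Polynomial ℚ) : PowerSeries ℚ) ≠ 0 := by
    rw [Ne, Polynomial.coe_eq_zero_iff]
    exact nonZeroDivisors.coe_ne_zero b
  exact (mul_eq_zero.mp this).resolve_left hbne

lemma exists_relation (f : PowerSeries ℚ) (P : Polynomial (Polynomial ℚ))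
    (hPne : P ≠ 0) (hP : phi f P = 0) (R : Fin (P.natDegree + 1) → Polynomial (Polynomial ℚ)) :
    ∃ c : Fin (P.natDegree + 1) → Polynomial ℚ, (∃ i, c i ≠ 0) ∧
      phi f (∑ i, Polynomial.C (c i) * R i) = 0 := by
  set F := RatFunc ℚ
  set μ : Polynomial (Polynomial ℚ) →+* Polynomial F :=
    Polynomial.mapRingHom (algebraMap (Polynomial ℚ) F) with hμ
  have halginj : Function.Injective (algebraMap (Polynomial ℚ) F) := IsFractionRing.injective _ _
  have hP' : μ P ≠ 0 := fun h => hPne (Polynomial.map_injective _ halginj (by rw [Polynomial.map_zero]; exact h))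
  set pb := AdjoinRoot.powerBasis hP'
  have hfd : Module.Finite F (AdjoinRoot (μ P)) := pb.finite
  have hfr : Module.finrank F (AdjoinRoot (μ P)) = P.natDegree := by
    rw [pb.finrank]
    show (μ P).natDegree = _
    exact Polynomial.natDegree_map_eq_of_injective halginj P
  set v : Fin (P.natDegree + 1) → AdjoinRoot (μ P) := fun i => AdjoinRoot.mk (μ P) (μ (R i))
  have hnli : ¬ LinearIndependent F v := by
    intro h
    have := h.fintype_card_le_finrank
    rw [hfr, Fintype.card_fin] at this
    omega
  obtain ⟨c, hc0, i₀, hci₀⟩ := Fintype.not_linearIndependent_iff.mp hnli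
  obtain ⟨b, hb⟩ := IsLocalization.exist_integer_multiples_of_finite
    (nonZeroDivisors (Polynomial ℚ)) c
  choose q hq using hb
  have hbne : algebraMap (Polynomial ℚ) F b ≠ 0 := by
    have : (b : Polynomial ℚ) ≠ 0 := nonZeroDivisors.coe_ne_zero b
    exact fun h => this (halginj (by simpa using h))
  refine ⟨q, ⟨i₀, ?_⟩, ?_⟩
  · intro h
    apply hci₀
    have := hq i₀
    rw [h, map_zero, Algebra.smul_def] at this
    exact (mul_eq_zero.mp this.symm).resolve_left hbne
  · apply phi_kill_of_dvd f _ _ hP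
    rw [← AdjoinRoot.mk_eq_zero]
    have hz : ∑ i, (algebraMap (Polynomial ℚ) F (q i)) • v i = 0 := by
      have h1 : ∀ i, (algebraMap (Polynomial ℚ) F (q i)) • v i
          = (algebraMap (Polynomial ℚ) F b) • (c i • v i) := by
        intro i
        rw [hq i, show ((b : Polynomial ℚ) • c i : F)
          = algebraMap (Polynomial ℚ) F b * c i from Algebra.smul_def _ _, mul_smul]
      rw [Finset.sum_congr rfl fun i _ => h1 i, ← Finset.smul_sum, hc0, smul_zero]
    have key : ∀ i : Fin (P.natDegree + 1), AdjoinRoot.mk (μ P) (μ (Polynomial.C (q i) * R i))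
        = (algebraMap (Polynomial ℚ) F (q i)) • v i := by
      intro i
      rw [map_mul]
      have hC : μ (Polynomial.C (q i)) = Polynomial.C (algebraMap (Polynomial ℚ) F (q i)) := by
        rw [hμ, Polynomial.coe_mapRingHom, Polynomial.map_C]
      rw [hC, ← Polynomial.smul_eq_C_mul, ← AdjoinRoot.smul_mk]
    show AdjoinRoot.mk (μ P) (μ (∑ i, Polynomial.C (q i) * R i)) = 0
    rw [map_sum, map_sum, Finset.sum_congr rfl fun i _ => key i]
    exact hz

/-- Every algebraic formal power series over ℚ is D-finite: if f satisfies a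
nontrivial polynomial equation ∑_{i=0}^{A} pᵢ(X)·fⁱ = 0 with A ≥ 1, then there
are polynomials q₀, …, q_L, not all zero, with ∑_{i=0}^{L} qᵢ(X)·f⁽ⁱ⁾ = 0,
where f⁽ⁱ⁾ is the i-th formal derivative of f. -/
theorem algebraic_powerSeries_isDFinite (f : PowerSeries ℚ) (A : ℕ)
    (p : ℕ → Polynomial ℚ) (hA : 1 ≤ A) (hp : ∃ i ≤ A, p i ≠ 0)
    (heq : ∑ i ∈ Finset.range (A + 1), (p i : PowerSeries ℚ) * f ^ i = 0) :
    ∃ (L : ℕ) (q : ℕ → Polynomial ℚ), (∃ i ≤ L, q i ≠ 0) ∧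
      ∑ i ∈ Finset.range (L + 1),
        (q i : PowerSeries ℚ) * (PowerSeries.derivativeFun^[i] f) = 0 := by
  classical
  -- the annihilating polynomial in ℚ[X][Y]
  set P₀ : Polynomial (Polynomial ℚ) :=
    ∑ i ∈ Finset.range (A + 1), Polynomial.C (p i) * Polynomial.X ^ i with hP₀
  obtain ⟨i₀, hi₀A, hpi₀⟩ := hp
  have hP₀ne : P₀ ≠ 0 := by
    intro h
    apply hpi₀
    have := congrArg (fun Q => Polynomial.coeff Q i₀) h
    simp only [hP₀, Polynomial.finset_sum_coeff, Polynomial.coeff_C_mul,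
      Polynomial.coeff_X_pow, Polynomial.coeff_zero] at this
    rw [Finset.sum_eq_single i₀] at this
    · simpa using this
    · intro b _ hb; simp [Ne.symm hb]
    · intro h; exact absurd (Finset.mem_range.mpr (by omega)) h
  have hP₀eq : phi f P₀ = 0 := by
    rw [hP₀, map_sum, ← heq]
    refine Finset.sum_congr rfl fun i _ => ?_
    rw [map_mul, map_pow, phi_C, phi_X]
  -- a minimal-degree annihilating polynomial
  set pred : ℕ → Prop := fun n => ∃ P : Polynomial (Polynomial ℚ),
    P ≠ 0 ∧ phi f P = 0 ∧ P.natDegree ≤ n with hpred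
  have hpredA : pred P₀.natDegree := ⟨P₀, hP₀ne, hP₀eq, le_refl _⟩
  set n₀ := Nat.find ⟨P₀.natDegree, hpredA⟩ with hn₀
  obtain ⟨P, hPne, hPeq, hPdeg⟩ := Nat.find_spec (⟨P₀.natDegree, hpredA⟩ : ∃ n, pred n)
  have hmin : ∀ m, m < n₀ → ¬ pred m := fun m hm => Nat.find_min _ hm
  have hPdeg' : P.natDegree = n₀ := by
    rcases lt_or_eq_of_le hPdeg with h | h
    · exact absurd ⟨P, hPne, hPeq, le_refl _⟩ (hmin _ h)
    · exact h
  have hn₀pos : 1 ≤ n₀ := by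
    by_contra h
    push_neg at h
    interval_cases n₀
    · rw [Polynomial.natDegree_eq_zero] at hPdeg'
      obtain ⟨a, ha⟩ := hPdeg'
      rw [← ha, phi_C, Polynomial.coe_eq_zero_iff] at hPeq
      rw [← ha, hPeq] at hPne
      simp at hPne
  set D := Polynomial.derivative P with hD
  have hDne : D ≠ 0 := by
    intro h
    have := Polynomial.natDegree_eq_zero_of_derivative_eq_zero h
    omega
  have hgne : phi f D ≠ 0 := by
    intro h
    apply hmin (n₀ - 1) (by omega)
    refine ⟨D, hDne, h, ?_⟩
    rw [hD]
    have := Polynomial.natDegree_derivative_lt (p := P) (by omega)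
    omega
  set g := phi f D with hg
  set n := P.natDegree with hn
  -- the shifted family
  choose Q hQ using ind_family f P hPeq
  set R : Fin (n + 1) → Polynomial (Polynomial ℚ) := fun i => D ^ (2*(n - i)) * Q i with hR
  have hQ' : ∀ k : ℕ, g ^ (2*k) * (PowerSeries.derivativeFun^[k] f) = phi f (Q k) := by
    intro k
    rw [hg, hD]
    exact hQ k
  have hRphi : ∀ i : Fin (n + 1),
      phi f (R i) = g ^ (2*n) * (PowerSeries.derivativeFun^[(i : ℕ)] f) := by
    intro i
    have h1 : phi f (R i) = g ^ (2*(n - (i : ℕ))) * phi f (Q (i : ℕ)) := by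
      simp only [hR]
      rw [map_mul, map_pow, hg]
    rw [h1, ← hQ' (i : ℕ), ← mul_assoc, ← pow_add]
    congr 2
    have := i.isLt
    omega
  obtain ⟨c, ⟨j₀, hj₀⟩, hrel⟩ := exists_relation f P hPne hPeq R
  rw [map_sum] at hrel
  have hrel2 : g ^ (2*n) * ∑ i : Fin (n + 1),
      ((c i : PowerSeries ℚ)) * (PowerSeries.derivativeFun^[(i : ℕ)] f) = 0 := by
    rw [Finset.mul_sum, ← hrel]
    refine Finset.sum_congr rfl fun i _ => ?_
    rw [map_mul, phi_C, hRphi i]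
    ring
  have hrel3 : ∑ i : Fin (n + 1),
      ((c i : PowerSeries ℚ)) * (PowerSeries.derivativeFun^[(i : ℕ)] f) = 0 :=
    (mul_eq_zero.mp hrel2).resolve_left (pow_ne_zero _ hgne)
  refine ⟨n, fun j => if h : j < n + 1 then c ⟨j, h⟩ else 0, ⟨j₀, by omega, ?_⟩, ?_⟩
  · simp only
    rw [dif_pos (show (j₀ : ℕ) < n + 1 from j₀.isLt)]
    simpa using hj₀
  · rw [Finset.sum_range fun j => ((if h : j < n + 1 then c ⟨j, h⟩ else 0 : Polynomial ℚ)
        : PowerSeries ℚ) * (PowerSeries.derivativeFun^[j] f)]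
    rw [← hrel3]
    refine Finset.sum_congr rfl fun i _ => ?_
    rw [dif_pos i.isLt]

end AlgToDiff
end

section
/- Let f = ∑_{n≥0} a(n)·Xⁿ ∈ ℚ⟦X⟧ satisfy a nontrivial linear differential equation with polynomial coefficients: ∑_{i=0}^{L} qᵢ(X)·f⁽ⁱ⁾ = 0 with q₀, …, q_L ∈ ℚ[X] not all zero, where f⁽ⁱ⁾ is the i-th formal derivative. Then the coefficient sequence a is P-recursive: there exist an integer M ≥ 0, polynomials c₀(n), …, c_M(n) ∈ ℚ[n], not all zero, and an integer n₀ ≥ M, such that ∑_{i=0}^{M} cᵢ(n)·a(n−i) = 0 for every integer n ≥ n₀. -/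
open Finset Polynomial

lemma coeff_iter_deriv (i : ℕ) : ∀ (f : PowerSeries ℚ) (m : ℕ),
    PowerSeries.coeff m (PowerSeries.derivativeFun^[i] f)
      = (∏ t ∈ Finset.range i, ((m + t + 1 : ℕ) : ℚ)) * PowerSeries.coeff (m + i) f := by
  induction i with
  | zero => intro f m; simp
  | succ i ih =>
    intro f m
    rw [Function.iterate_succ_apply, ih]
    rw [show f.derivativeFun = PowerSeries.derivative ℚ f from rfl,
      PowerSeries.coeff_derivative, Finset.prod_range_succ]
    push_cast
    ring_nf

/-- If a formal power series f over ℚ satisfies a nontrivial linear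
differential equation ∑_{i=0}^{L} qᵢ(X)·f⁽ⁱ⁾ = 0 with polynomial coefficients,
then its coefficient sequence a(n) is P-recursive: there exist M ≥ 0,
polynomials c₀, …, c_M not all zero, and n₀ ≥ M such that
∑_{i=0}^{M} cᵢ(n)·a(n−i) = 0 for every n ≥ n₀. -/
theorem dFinite_coeffs_pRecursive (f : PowerSeries ℚ) (L : ℕ)
    (q : ℕ → Polynomial ℚ) (hq : ∃ i ≤ L, q i ≠ 0)
    (heq : ∑ i ∈ Finset.range (L + 1),
        (q i : PowerSeries ℚ) * (PowerSeries.derivativeFun^[i] f) = 0) :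
    ∃ (M : ℕ) (c : ℕ → Polynomial ℚ) (n₀ : ℕ), M ≤ n₀ ∧ (∃ i ≤ M, c i ≠ 0) ∧
      ∀ n : ℕ, n₀ ≤ n →
        ∑ i ∈ Finset.range (M + 1),
          (c i).eval (n : ℚ) * PowerSeries.coeff (n - i) f = 0 := by
  classical
  obtain ⟨i₀, hi₀L, hqi₀⟩ := hq
  set a : ℕ → ℚ := fun n => PowerSeries.coeff n f with ha
  set D := (Finset.range (L+1)).sup (fun i => (q i).natDegree) with hDdef
  have hdeg : ∀ i ≤ L, (q i).natDegree ≤ D := fun i hi =>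
    Finset.le_sup (f := fun i => (q i).natDegree) (Finset.mem_range.2 (Nat.lt_succ_of_le hi))
  set M := L + D with hMdef
  set c : ℕ → Polynomial ℚ := fun k => ∑ i ∈ Finset.range (L+1),
    if L ≤ k + i then Polynomial.C ((q i).coeff (k + i - L)) *
      ∏ t ∈ Finset.range i, (Polynomial.X - Polynomial.C (((k + t : ℕ) : ℚ))) else 0
    with hcdef
  -- facts about the products
  have hmonic : ∀ (k i : ℕ), (∏ t ∈ Finset.range i,
      (Polynomial.X - Polynomial.C (((k + t : ℕ) : ℚ)))).Monic :=
    fun k i => monic_prod_of_monic _ _ (fun t _ => monic_X_sub_C _)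
  have hdegP : ∀ (k i : ℕ), (∏ t ∈ Finset.range i,
      (Polynomial.X - Polynomial.C (((k + t : ℕ) : ℚ)))).natDegree = i := by
    intro k i
    rw [Polynomial.natDegree_prod]
    · simp only [Polynomial.natDegree_X_sub_C, Finset.sum_const, smul_eq_mul, mul_one,
        Finset.card_range]
    · intro t _; exact (monic_X_sub_C _).ne_zero
  refine ⟨M, c, M, le_rfl, ?_, ?_⟩
  · -- nontriviality
    set S := (Finset.range (L+1)).filter (fun i => q i ≠ 0) with hS
    have hSne : S.Nonempty := ⟨i₀, Finset.mem_filter.mpr ⟨Finset.mem_range.mpr (by omega), hqi₀⟩⟩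
    set i := S.max' hSne with hi
    have hiS : i ∈ S := S.max'_mem hSne
    have hiL : i ≤ L := by
      have := (Finset.mem_filter.mp hiS).1
      have := Finset.mem_range.mp this
      omega
    have hqi : q i ≠ 0 := (Finset.mem_filter.mp hiS).2
    have hmax : ∀ i', i' ∈ S → i' ≤ i := fun i' h => S.le_max' i' h
    set j := (q i).natDegree with hj
    have hjD : j ≤ D := hdeg i hiL
    have hlead : (q i).coeff j ≠ 0 := Polynomial.leadingCoeff_ne_zero.mpr hqi
    refine ⟨L - i + j, by omega, ?_⟩
    have hkey : (c (L - i + j)).coeff i = (q i).coeff j := by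
      set k := L - i + j with hk
      show (∑ i' ∈ Finset.range (L+1),
        if L ≤ k + i' then Polynomial.C ((q i').coeff (k + i' - L)) *
          ∏ t ∈ Finset.range i', (Polynomial.X - Polynomial.C (((k + t : ℕ) : ℚ))) else 0).coeff i
        = (q i).coeff j
      rw [Polynomial.finset_sum_coeff]
      rw [Finset.sum_eq_single i]
      · rw [if_pos (show L ≤ k + i by omega)]
        have h1 : k + i - L = j := by omega
        have h2 : (∏ t ∈ Finset.range i,
            (Polynomial.X - Polynomial.C (((k + t : ℕ) : ℚ)))).coeff i = 1 := by
          have h := (hmonic k i).coeff_natDegree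
          rw [hdegP k i] at h
          exact h
        rw [h1, Polynomial.coeff_C_mul, h2, mul_one]
      · intro i' hi' hne
        rcases lt_or_gt_of_ne hne with hlt | hgt
        · split
          · apply Polynomial.coeff_eq_zero_of_natDegree_lt
            calc (Polynomial.C ((q i').coeff (k + i' - L)) *
                  ∏ t ∈ Finset.range i', (Polynomial.X - Polynomial.C (((k + t : ℕ) : ℚ)))).natDegree
                ≤ (∏ t ∈ Finset.range i',
                    (Polynomial.X - Polynomial.C (((k + t : ℕ) : ℚ)))).natDegree :=
                  Polynomial.natDegree_C_mul_le _ _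
              _ = i' := hdegP k i'
              _ < i := hlt
          · simp
        · have hq0 : q i' = 0 := by
            by_contra h
            have : i' ∈ S := Finset.mem_filter.mpr ⟨hi', h⟩
            have := hmax i' this
            omega
          split
          · rw [hq0]
            simp
          · simp
      · intro h
        exact absurd (Finset.mem_range.mpr (by omega)) h
    intro hc0
    rw [hc0, Polynomial.coeff_zero] at hkey
    exact hlead hkey.symm
  · -- the recurrence
    intro n hn
    have hmn : L + D ≤ n := hn
    set m := n - L with hm
    -- base identity from the ODE
    have h0 : ∑ i ∈ Finset.range (L+1), ∑ j ∈ Finset.range (m+1),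
        (q i).coeff j * ((∏ t ∈ Finset.range i, ((m - j + t + 1 : ℕ) : ℚ)) * a (m - j + i)) = 0 := by
      have h1 := congrArg (PowerSeries.coeff m) heq
      rw [map_sum, map_zero] at h1
      rw [← h1]
      refine Finset.sum_congr rfl (fun i hi => ?_)
      rw [PowerSeries.coeff_mul, Finset.Nat.sum_antidiagonal_eq_sum_range_succ
        (fun x y => PowerSeries.coeff x (q i : PowerSeries ℚ) * PowerSeries.coeff y
          (PowerSeries.derivativeFun^[i] f))]
      refine Finset.sum_congr rfl (fun j hj => ?_)
      rw [Polynomial.coeff_coe, coeff_iter_deriv]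
    -- rewrite the goal
    rw [← h0]
    have heval : ∀ k, (c k).eval (n : ℚ) = ∑ i ∈ Finset.range (L+1),
        if L ≤ k + i then (q i).coeff (k + i - L) *
          ∏ t ∈ Finset.range i, ((n : ℚ) - ((k + t : ℕ) : ℚ)) else 0 := by
      intro k
      rw [hcdef]
      rw [Polynomial.eval_finset_sum]
      refine Finset.sum_congr rfl (fun i _ => ?_)
      split
      · rw [Polynomial.eval_mul, Polynomial.eval_C, Polynomial.eval_prod]
        simp
      · simp
    calc ∑ k ∈ Finset.range (M+1), (c k).eval (n:ℚ) * a (n - k)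
        = ∑ k ∈ Finset.range (M+1), ∑ i ∈ Finset.range (L+1),
            (if L ≤ k + i then (q i).coeff (k + i - L) *
              ∏ t ∈ Finset.range i, ((n : ℚ) - ((k + t : ℕ) : ℚ)) else 0) * a (n - k) := by
          refine Finset.sum_congr rfl (fun k _ => ?_)
          rw [heval, Finset.sum_mul]
      _ = ∑ i ∈ Finset.range (L+1), ∑ k ∈ Finset.range (M+1),
            (if L ≤ k + i then (q i).coeff (k + i - L) *
              ∏ t ∈ Finset.range i, ((n : ℚ) - ((k + t : ℕ) : ℚ)) else 0) * a (n - k) :=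
          Finset.sum_comm
      _ = ∑ i ∈ Finset.range (L+1), ∑ j ∈ Finset.range (m+1),
            (q i).coeff j * ((∏ t ∈ Finset.range i, ((m - j + t + 1 : ℕ) : ℚ)) * a (m - j + i)) := by
          refine Finset.sum_congr rfl (fun i hi => ?_)
          have hiL : i ≤ L := Nat.lt_succ_iff.mp (Finset.mem_range.mp hi)
          have hDm : D ≤ m := by omega
          calc (∑ k ∈ Finset.range (M+1), (if L ≤ k + i then (q i).coeff (k + i - L) *
                  ∏ t ∈ Finset.range i, ((n : ℚ) - ((k + t : ℕ) : ℚ)) else 0) * a (n - k))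
              = ∑ k ∈ (Finset.range (D+1)).image (fun j => L - i + j),
                  (if L ≤ k + i then (q i).coeff (k + i - L) *
                    ∏ t ∈ Finset.range i, ((n : ℚ) - ((k + t : ℕ) : ℚ)) else 0) * a (n - k) := by
                refine (Finset.sum_subset ?_ ?_).symm
                · intro k hk
                  obtain ⟨j, hj, rfl⟩ := Finset.mem_image.mp hk
                  have := Finset.mem_range.mp hj
                  exact Finset.mem_range.mpr (by omega)
                · intro k hk hk'
                  by_cases h : L ≤ k + i
                  · have hcoeff : (q i).coeff (k + i - L) = 0 := by
                      apply Polynomial.coeff_eq_zero_of_natDegree_lt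
                      have hni : ¬ (k + i - L ≤ D) := by
                        intro hle
                        exact hk' (Finset.mem_image.mpr ⟨k + i - L,
                          Finset.mem_range.mpr (by omega), by omega⟩)
                      have := hdeg i hiL
                      omega
                    rw [if_pos h, hcoeff, zero_mul, zero_mul]
                  · rw [if_neg h, zero_mul]
            _ = ∑ j ∈ Finset.range (D+1), (if L ≤ (L - i + j) + i then
                    (q i).coeff ((L - i + j) + i - L) *
                    ∏ t ∈ Finset.range i, ((n : ℚ) - (((L - i + j) + t : ℕ) : ℚ)) else 0)
                    * a (n - (L - i + j)) :=
                Finset.sum_image (fun x _ y _ h => by omega)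
            _ = ∑ j ∈ Finset.range (D+1), (q i).coeff j *
                  ((∏ t ∈ Finset.range i, ((m - j + t + 1 : ℕ) : ℚ)) * a (m - j + i)) := by
                refine Finset.sum_congr rfl (fun j hj => ?_)
                have hjD : j ≤ D := Nat.lt_succ_iff.mp (Finset.mem_range.mp hj)
                rw [if_pos (show L ≤ (L - i + j) + i by omega)]
                have h1 : (L - i + j) + i - L = j := by omega
                have h2 : n - (L - i + j) = m - j + i := by omega
                have hprod : (∏ t ∈ Finset.range i, ((n : ℚ) - (((L - i + j) + t : ℕ) : ℚ)))
                    = ∏ t ∈ Finset.range i, ((m - j + t + 1 : ℕ) : ℚ) := by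
                  rw [← Finset.prod_range_reflect
                    (fun t => ((n : ℚ) - (((L - i + j) + t : ℕ) : ℚ))) i]
                  refine Finset.prod_congr rfl (fun t ht => ?_)
                  have htlt : t < i := Finset.mem_range.mp ht
                  have hle : (L - i + j) + (i - 1 - t) ≤ n := by omega
                  have hsub : n - ((L - i + j) + (i - 1 - t)) = m - j + t + 1 := by omega
                  rw [← hsub]
                  exact (Nat.cast_sub hle).symm
                rw [h1, h2, hprod]
                ring
            _ = ∑ j ∈ Finset.range (m+1), (q i).coeff j *
                  ((∏ t ∈ Finset.range i, ((m - j + t + 1 : ℕ) : ℚ)) * a (m - j + i)) := by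
                refine Finset.sum_subset (Finset.range_subset_range.mpr (by omega)) ?_
                intro j hj hj'
                have hz : (q i).coeff j = 0 := by
                  apply Polynomial.coeff_eq_zero_of_natDegree_lt
                  have := hdeg i hiL
                  have := Finset.mem_range.mp hj
                  have : ¬ j < D + 1 := fun h => hj' (Finset.mem_range.mpr h)
                  omega
                rw [hz, zero_mul]
end

section
/- If f = ∑_{n≥0} a(n)·Xⁿ ∈ ℚ⟦X⟧ is an algebraic formal power series, i.e. ∑_{i=0}^{A} pᵢ(X)·fⁱ = 0 for some polynomials p₀, …, p_A ∈ ℚ[X] not all zero, then its coefficient sequence is P-recursive: there exist an integer M ≥ 0, polynomials c₀(n), …, c_M(n) ∈ ℚ[n], not all zero, and an integer n₀ ≥ M, such that ∑_{i=0}^{M} cᵢ(n)·a(n−i) = 0 for every integer n ≥ n₀. -/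
open Polynomial PowerSeries IntermediateField
open scoped RatFunc

set_option maxHeartbeats 1000000

/-! ### Auxiliary machinery -/

instance : IsScalarTower (Polynomial ℚ) (PowerSeries ℚ) (LaurentSeries ℚ) :=
  IsScalarTower.of_algebraMap_eq fun _ => rfl

lemma algMap_eq (a : Polynomial ℚ) :
    algebraMap (Polynomial ℚ) (PowerSeries ℚ) a = (a : PowerSeries ℚ) := by
  show PowerSeries.map (algebraMap ℚ ℚ) ↑a = ↑a
  ext n
  simp

lemma coe_natCast_PS (n : ℕ) : (((n : Polynomial ℚ)) : PowerSeries ℚ) = (n : PowerSeries ℚ) := by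
  rw [← algMap_eq]; simp

/-- Coefficient-wise `X`-derivative on `(ℚ[X])[Y]`. -/
noncomputable def dX (Q : Polynomial (Polynomial ℚ)) : Polynomial (Polynomial ℚ) :=
  Q.sum fun n a => Polynomial.monomial n (Polynomial.derivative a)

lemma dX_monomial (n : ℕ) (a : Polynomial ℚ) :
    dX (Polynomial.monomial n a) = Polynomial.monomial n (Polynomial.derivative a) := by
  simp [dX, Polynomial.sum_monomial_index]

lemma dX_add (Q R : Polynomial (Polynomial ℚ)) : dX (Q + R) = dX Q + dX R := by
  unfold dX
  rw [Polynomial.sum_add_index] <;> simp [map_add]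

/-- Chain rule for the formal derivative of `Q(X, f)`. -/
lemma chain (x : PowerSeries ℚ) (Q : Polynomial (Polynomial ℚ)) :
    (d⁄dX ℚ) (Polynomial.aeval x Q) =
      Polynomial.aeval x (dX Q) + Polynomial.aeval x (Polynomial.derivative Q) * (d⁄dX ℚ) x := by
  induction Q using Polynomial.induction_on' with
  | add p q hp hq =>
      simp only [map_add, hp, hq, dX_add, map_add]; ring
  | monomial n a =>
      rw [Polynomial.aeval_monomial, dX_monomial, Polynomial.derivative_monomial,
        Polynomial.aeval_monomial, Polynomial.aeval_monomial]
      rw [Derivation.leibniz, Derivation.leibniz_pow]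
      rw [algMap_eq, algMap_eq, algMap_eq, PowerSeries.derivative_coe]
      push_cast [coe_natCast_PS]
      simp only [smul_eq_mul, nsmul_eq_mul]
      ring

/-- All iterated derivatives of an algebraic power series, multiplied by a suitable
power of `P_Y(X, f)`, are polynomial expressions in `X` and `f`. -/
lemma iter_deriv (f : PowerSeries ℚ) (P : Polynomial (Polynomial ℚ))
    (hP : Polynomial.aeval f P = 0) (k : ℕ) :
    ∃ Q : Polynomial (Polynomial ℚ),
      (Polynomial.aeval f (Polynomial.derivative P)) ^ (2*k+1) * (⇑(d⁄dX ℚ))^[k] f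
        = Polynomial.aeval f Q := by
  induction k with
  | zero =>
      exact ⟨Polynomial.derivative P * Polynomial.X, by
        simp [Function.iterate_zero, map_mul, Polynomial.aeval_X, pow_one]⟩
  | succ k ih =>
      obtain ⟨Q, hQ⟩ := ih
      set D := d⁄dX ℚ with hDdef
      set g : PowerSeries ℚ := Polynomial.aeval f (Polynomial.derivative P) with hg
      set dP := Polynomial.derivative P with hdP
      have hgf : Polynomial.aeval f (dX P) + g * D f = 0 := by
        have h := chain f P
        rw [hP, map_zero] at h
        exact h.symm
      have hDg : D g = Polynomial.aeval f (dX dP) + Polynomial.aeval f (Polynomial.derivative dP) * D f :=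
        chain f dP
      have h1 : D (g ^ (2*k+1) * (⇑D)^[k] f) = D (Polynomial.aeval f Q) := by rw [hQ]
      rw [chain f Q] at h1
      rw [Derivation.leibniz, Derivation.leibniz_pow] at h1
      simp only [smul_eq_mul, nsmul_eq_mul, Nat.add_sub_cancel, Nat.cast_add, Nat.cast_mul,
        Nat.cast_ofNat, Nat.cast_one] at h1
      refine ⟨dP^2 * dX Q - dP * Polynomial.derivative Q * dX P
        - ((2*k+1 : ℕ) : Polynomial (Polynomial ℚ)) * Q *
            (dP * dX dP - Polynomial.derivative dP * dX P), ?_⟩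
      rw [Function.iterate_succ_apply']
      push_cast [map_sub, map_mul, map_pow, map_natCast]
      simp only [map_add, map_mul, map_one, map_natCast, map_ofNat]
      linear_combination (g^2) * h1 +
        (g * Polynomial.aeval f (Polynomial.derivative Q)
          - ((2*k+1 : PowerSeries ℚ)) * Polynomial.aeval f Q * Polynomial.aeval f (Polynomial.derivative dP)) * hgf
        - ((2*k+1 : PowerSeries ℚ)) * g * (D g) * hQ
        - ((2*k+1 : PowerSeries ℚ)) * Polynomial.aeval f Q * g * hDg

/-- Dimension argument: elements of a finite extension `F⟮x⟯` which become members
of `F⟮x⟯` after multiplication by powers of a fixed nonzero member are linearly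
dependent over `F` once there are enough of them. -/
lemma exists_dep {F L : Type} [Field F] [Field L] [Algebra F L] (x : L)
    (hx : IsIntegral F x) (v : ℕ → L) (g : L) (hg : g ≠ 0) (hgmem : g ∈ F⟮x⟯)
    (hv : ∀ k : ℕ, ∃ w ∈ F⟮x⟯, g ^ (2*k+1) * v k = w) :
    ∃ (r : ℕ) (s : Fin (r+1) → F), (∃ i, s i ≠ 0) ∧ ∑ i, s i • v (i : ℕ) = 0 := by
  have hfd : FiniteDimensional F F⟮x⟯ := IntermediateField.adjoin.finiteDimensional hx
  set r := Module.finrank F F⟮x⟯ with hr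
  have hvmem : ∀ k : ℕ, v k ∈ F⟮x⟯ := by
    intro k
    obtain ⟨w, hwmem, hw⟩ := hv k
    have hgpow : g ^ (2*k+1) ≠ 0 := pow_ne_zero _ hg
    have : v k = w * (g ^ (2*k+1))⁻¹ := by
      rw [← hw, mul_comm (g ^ (2*k+1)) (v k), mul_inv_cancel_right₀ hgpow]
    rw [this]
    exact mul_mem hwmem (inv_mem (pow_mem hgmem _))
  set w : Fin (r+1) → F⟮x⟯ := fun i => ⟨v i, hvmem i⟩ with hwdef
  have hnli : ¬ LinearIndependent F w := by
    intro h
    have := h.fintype_card_le_finrank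
    simp [hr] at this
  obtain ⟨s, hsum, i, hi⟩ := Fintype.not_linearIndependent_iff.mp hnli
  refine ⟨r, s, ⟨i, hi⟩, ?_⟩
  have := congrArg (Subtype.val) hsum
  simpa [hwdef] using this

/-- Any algebraic power series over ℚ is D-finite (holonomic). -/
lemma dfinite (f : PowerSeries ℚ) (P : Polynomial (Polynomial ℚ))
    (hP0 : P ≠ 0) (hPf : Polynomial.aeval f P = 0) :
    ∃ (r : ℕ) (q : ℕ → Polynomial ℚ), (∃ k ≤ r, q k ≠ 0) ∧
      ∑ k ∈ Finset.range (r+1), ((q k : PowerSeries ℚ)) * (⇑(d⁄dX ℚ))^[k] f = 0 := by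
  classical
  -- minimal-degree annihilator
  set S : Set ℕ := {n | ∃ Q : Polynomial (Polynomial ℚ),
      Q ≠ 0 ∧ Polynomial.aeval f Q = 0 ∧ Q.natDegree = n} with hS
  have hSne : S.Nonempty := ⟨P.natDegree, P, hP0, hPf, rfl⟩
  obtain ⟨P₁, hP₁0, hP₁f, hP₁d⟩ := Nat.sInf_mem hSne
  have h0 : P₁.natDegree ≠ 0 := by
    intro h
    obtain ⟨c, hc⟩ := Polynomial.natDegree_eq_zero.mp h
    apply hP₁0
    rw [← hc] at hP₁f ⊢
    rw [Polynomial.aeval_C, algMap_eq, Polynomial.coe_eq_zero_iff] at hP₁f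
    rw [hP₁f, map_zero]
  have hdP1 : Polynomial.derivative P₁ ≠ 0 := by
    intro h
    have h2 := Polynomial.coeff_derivative P₁ (P₁.natDegree - 1)
    have hnn : P₁.natDegree - 1 + 1 = P₁.natDegree := by omega
    rw [h, Polynomial.coeff_zero, hnn] at h2
    have hlc : P₁.coeff P₁.natDegree ≠ 0 := Polynomial.leadingCoeff_ne_zero.mpr hP₁0
    have : ((P₁.natDegree - 1 : ℕ) : Polynomial ℚ) + 1 ≠ 0 := by
      intro hh
      have hcast : ((P₁.natDegree - 1 + 1 : ℕ) : Polynomial ℚ) = 0 := by push_cast; linear_combination hh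
      rw [hnn, Nat.cast_eq_zero] at hcast
      exact h0 hcast
    exact (mul_ne_zero hlc this) h2.symm
  set g : PowerSeries ℚ := Polynomial.aeval f (Polynomial.derivative P₁) with hgdef
  have hgne : g ≠ 0 := by
    intro h
    have hmem : (Polynomial.derivative P₁).natDegree ∈ S :=
      ⟨Polynomial.derivative P₁, hdP1, h, rfl⟩
    have hlt : (Polynomial.derivative P₁).natDegree < P₁.natDegree :=
      Polynomial.natDegree_derivative_lt h0
    have := Nat.sInf_le hmem
    omega
  -- move to Laurent series
  set ι := algebraMap (PowerSeries ℚ) (LaurentSeries ℚ) with hιdef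
  have hιinj : Function.Injective ι := HahnSeries.ofPowerSeries_injective
  set fL : LaurentSeries ℚ := ι f with hfL
  have hcomm : ∀ (x : PowerSeries ℚ) (Q : Polynomial (Polynomial ℚ)),
      ι (Polynomial.aeval x Q) = Polynomial.aeval (ι x) Q := fun x Q =>
    (Polynomial.aeval_algHom_apply
      (IsScalarTower.toAlgHom (Polynomial ℚ) (PowerSeries ℚ) (LaurentSeries ℚ)) x Q).symm
  have hmemQ : ∀ Q : Polynomial (Polynomial ℚ),
      Polynomial.aeval fL Q ∈ (RatFunc ℚ)⟮fL⟯ := by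
    intro Q
    rw [← Polynomial.aeval_map_algebraMap (RatFunc ℚ)]
    have h1 : Polynomial.aeval fL (Q.map (algebraMap (Polynomial ℚ) (RatFunc ℚ)))
        ∈ Algebra.adjoin (RatFunc ℚ) {fL} := by
      rw [Algebra.adjoin_singleton_eq_range_aeval]
      exact ⟨_, rfl⟩
    exact IntermediateField.algebra_adjoin_le_adjoin (RatFunc ℚ) {fL} h1
  have hint : IsIntegral (RatFunc ℚ) fL := by
    apply IsAlgebraic.isIntegral
    refine ⟨P₁.map (algebraMap (Polynomial ℚ) (RatFunc ℚ)), ?_, ?_⟩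
    · intro h
      apply hP₁0
      have := Polynomial.map_injective _
        (IsFractionRing.injective (Polynomial ℚ) (RatFunc ℚ)) (h.trans (Polynomial.map_zero _).symm)
      exact this
    · rw [Polynomial.aeval_map_algebraMap, ← hcomm, hP₁f, map_zero]
  have hgLne : ι g ≠ 0 := fun h => hgne (hιinj (h.trans (map_zero ι).symm))
  have hgLmem : ι g ∈ (RatFunc ℚ)⟮fL⟯ := by rw [hgdef, hcomm]; exact hmemQ _
  have hv : ∀ k : ℕ, ∃ w ∈ (RatFunc ℚ)⟮fL⟯,
      (ι g) ^ (2*k+1) * (ι ((⇑(d⁄dX ℚ))^[k] f)) = w := by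
    intro k
    obtain ⟨Q, hQ⟩ := iter_deriv f P₁ hP₁f k
    refine ⟨Polynomial.aeval fL Q, hmemQ Q, ?_⟩
    rw [← hcomm, ← hQ, map_mul, map_pow]
  obtain ⟨r, s, ⟨i₀, hi₀⟩, hsum⟩ :=
    exists_dep fL hint (fun k => ι ((⇑(d⁄dX ℚ))^[k] f)) (ι g) hgLne hgLmem hv
  -- clear denominators
  set b : Polynomial ℚ := ∏ j, (s j).denom with hb
  set a : Fin (r+1) → Polynomial ℚ :=
    fun k => (s k).num * ∏ j ∈ Finset.univ.erase k, (s j).denom with ha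
  have hnum : ∀ t : RatFunc ℚ, algebraMap (Polynomial ℚ) (RatFunc ℚ) t.num
      = t * algebraMap (Polynomial ℚ) (RatFunc ℚ) t.denom := by
    intro t
    have hd : algebraMap (Polynomial ℚ) (RatFunc ℚ) t.denom ≠ 0 := by
      simpa [IsFractionRing.to_map_eq_zero_iff] using t.denom_ne_zero
    exact (div_eq_iff hd).mp (RatFunc.num_div_denom t)
  have key : ∀ k, algebraMap (Polynomial ℚ) (RatFunc ℚ) (a k)
      = s k * algebraMap (Polynomial ℚ) (RatFunc ℚ) b := by
    intro k
    rw [ha, hb]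
    simp only [map_mul, map_prod, hnum]
    rw [← Finset.mul_prod_erase Finset.univ
      (fun j => algebraMap (Polynomial ℚ) (RatFunc ℚ) (s j).denom) (Finset.mem_univ k)]
    ring
  have hana : a i₀ ≠ 0 := by
    apply mul_ne_zero (RatFunc.num_ne_zero hi₀)
    exact Finset.prod_ne_zero_iff.mpr fun j _ => RatFunc.denom_ne_zero _
  -- back to power series
  have hsum2 : ι (∑ k : Fin (r+1), ((a k : Polynomial ℚ) : PowerSeries ℚ)
      * (⇑(d⁄dX ℚ))^[(k : ℕ)] f) = 0 := by
    rw [map_sum]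
    have hterm : ∀ k : Fin (r+1), ι (((a k : Polynomial ℚ) : PowerSeries ℚ)
        * (⇑(d⁄dX ℚ))^[(k : ℕ)] f)
        = algebraMap (RatFunc ℚ) (LaurentSeries ℚ) (s k)
          * algebraMap (RatFunc ℚ) (LaurentSeries ℚ) (algebraMap (Polynomial ℚ) (RatFunc ℚ) b)
          * ι ((⇑(d⁄dX ℚ))^[(k : ℕ)] f) := by
      intro k
      rw [map_mul, ← algMap_eq, ← IsScalarTower.algebraMap_apply,
        IsScalarTower.algebraMap_apply (Polynomial ℚ) (RatFunc ℚ) (LaurentSeries ℚ), key k,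
        map_mul]
    simp only [hterm]
    have hre : ∀ x : Fin (r+1),
        algebraMap (RatFunc ℚ) (LaurentSeries ℚ) (s x)
          * algebraMap (RatFunc ℚ) (LaurentSeries ℚ) (algebraMap (Polynomial ℚ) (RatFunc ℚ) b)
          * ι ((⇑(d⁄dX ℚ))^[(x : ℕ)] f)
        = algebraMap (RatFunc ℚ) (LaurentSeries ℚ) (algebraMap (Polynomial ℚ) (RatFunc ℚ) b)
          * (s x • ι ((⇑(d⁄dX ℚ))^[(x : ℕ)] f)) := by
      intro x
      rw [Algebra.smul_def]
      ring
    simp only [hre, ← Finset.mul_sum, hsum, mul_zero]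
  have hfin : ∑ k : Fin (r+1), ((a k : Polynomial ℚ) : PowerSeries ℚ)
      * (⇑(d⁄dX ℚ))^[(k : ℕ)] f = 0 := hιinj (hsum2.trans (map_zero ι).symm)
  refine ⟨r, fun k => if h : k < r+1 then a ⟨k, h⟩ else 0, ⟨i₀, by omega, ?_⟩, ?_⟩
  · simpa [i₀.isLt] using hana
  · rw [← Fin.sum_univ_eq_sum_range
      (fun k => (((if h : k < r+1 then a ⟨k, h⟩ else 0 : Polynomial ℚ)) : PowerSeries ℚ)
        * (⇑(d⁄dX ℚ))^[k] f) (r+1), ← hfin]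
    apply Finset.sum_congr rfl
    intro x _
    simp [x.isLt]

lemma coeff_iter (k : ℕ) : ∀ (f : PowerSeries ℚ) (m : ℕ),
    PowerSeries.coeff m ((⇑(d⁄dX ℚ))^[k] f)
      = (∏ t ∈ Finset.range k, ((m : ℚ) + t + 1)) * PowerSeries.coeff (m + k) f := by
  induction k with
  | zero => simp
  | succ k ih =>
      intro f m
      rw [Function.iterate_succ_apply, ih, PowerSeries.coeff_derivative,
        Finset.prod_range_succ]
      have : m + k + 1 = m + (k + 1) := by omega
      rw [← this]
      push_cast
      ring

lemma coeff_mul_poly (g : Polynomial ℚ) (h : PowerSeries ℚ) (m : ℕ) :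
    PowerSeries.coeff m ((g : PowerSeries ℚ) * h)
      = ∑ j ∈ Finset.range (m+1), g.coeff j * PowerSeries.coeff (m - j) h := by
  rw [PowerSeries.coeff_mul, Finset.Nat.sum_antidiagonal_eq_sum_range_succ_mk]
  simp [Polynomial.coeff_coe]

/-- D-finite power series have P-recursive coefficients. -/
lemma rec_of_dfinite (f : PowerSeries ℚ) (d : ℕ) (q : ℕ → Polynomial ℚ)
    (hq : ∃ k ≤ d, q k ≠ 0)
    (h : ∑ k ∈ Finset.range (d+1), ((q k : PowerSeries ℚ)) * (⇑(d⁄dX ℚ))^[k] f = 0) :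
    ∃ (M : ℕ) (c : ℕ → Polynomial ℚ) (n₀ : ℕ), M ≤ n₀ ∧ (∃ i ≤ M, c i ≠ 0) ∧
      ∀ n : ℕ, n₀ ≤ n → ∑ i ∈ Finset.range (M + 1),
        (c i).eval (n : ℚ) * PowerSeries.coeff (n - i) f = 0 := by
  classical
  set J := (Finset.range (d+1)).sup (fun k => (q k).natDegree) with hJ
  set M := d + J with hM
  set P : Finset (ℕ × ℕ) := Finset.range (d+1) ×ˢ Finset.range (J+1) with hP
  set c : ℕ → Polynomial ℚ := fun i =>
    ∑ kj ∈ P, if d + kj.2 = i + kj.1 then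
        Polynomial.C ((q kj.1).coeff kj.2)
          * ∏ t ∈ Finset.range kj.1,
              (Polynomial.X + Polynomial.C ((t : ℚ) + 1 - (d : ℚ) - (kj.2 : ℚ)))
      else 0 with hc
  have hmemP : ∀ kj : ℕ × ℕ, kj ∈ P ↔ kj.1 ≤ d ∧ kj.2 ≤ J := by
    intro kj
    rw [hP, Finset.mem_product, Finset.mem_range, Finset.mem_range]
    omega
  refine ⟨M, c, M, le_rfl, ?_, ?_⟩
  · -- nontriviality
    obtain ⟨k₀, hk₀d, hq₀⟩ := hq
    set j₀ := (q k₀).natDegree with hj₀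
    have hj₀J : j₀ ≤ J := by
      rw [hj₀, hJ]
      exact Finset.le_sup (f := fun k => (q k).natDegree)
        (Finset.mem_range.mpr (Nat.lt_succ_of_le hk₀d))
    have hcoeffq₀ : (q k₀).coeff j₀ ≠ 0 := Polynomial.leadingCoeff_ne_zero.mpr hq₀
    set i₀ := d + j₀ - k₀ with hi₀
    set T : Finset (ℕ × ℕ) :=
      P.filter (fun kj => (q kj.1).coeff kj.2 ≠ 0 ∧ d + kj.2 = i₀ + kj.1) with hT
    have hk₀j₀T : (k₀, j₀) ∈ T := by
      rw [hT, Finset.mem_filter, hmemP]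
      exact ⟨⟨hk₀d, hj₀J⟩, hcoeffq₀, by omega⟩
    have hTne : (T.image Prod.fst).Nonempty := ⟨k₀, Finset.mem_image_of_mem _ hk₀j₀T⟩
    set ks := (T.image Prod.fst).max' hTne with hks
    obtain ⟨⟨k₁, j₁⟩, hk₁T, hk₁⟩ := Finset.mem_image.mp ((T.image Prod.fst).max'_mem hTne)
    obtain ⟨hk₁P, hq₁ne, hi₁⟩ := Finset.mem_filter.mp hk₁T
    dsimp only at hq₁ne hi₁ hk₁
    refine ⟨i₀, by rw [hM]; omega, ?_⟩
    intro hczero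
    apply hq₁ne
    have hcoeff : (c i₀).coeff ks = (q k₁).coeff j₁ := by
      rw [hc]
      rw [Polynomial.finset_sum_coeff]
      rw [Finset.sum_eq_single_of_mem (k₁, j₁) hk₁P]
      · dsimp only
        rw [if_pos hi₁, Polynomial.coeff_C_mul]
        have hmonic : (∏ t ∈ Finset.range k₁,
            (Polynomial.X + Polynomial.C ((t : ℚ) + 1 - (d : ℚ) - (j₁ : ℚ)))).Monic :=
          Polynomial.monic_prod_of_monic _ _ fun t _ => Polynomial.monic_X_add_C _
        have hdeg : (∏ t ∈ Finset.range k₁,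
            (Polynomial.X + Polynomial.C ((t : ℚ) + 1 - (d : ℚ) - (j₁ : ℚ)))).natDegree = k₁ := by
          rw [Polynomial.natDegree_prod _ _ fun t _ => Polynomial.X_add_C_ne_zero _]
          rw [Finset.sum_congr rfl fun t (_ : t ∈ Finset.range k₁) =>
            Polynomial.natDegree_X_add_C ((t : ℚ) + 1 - (d : ℚ) - (j₁ : ℚ))]
          rw [Finset.sum_const, smul_eq_mul, mul_one, Finset.card_range]
        have hcoef1 : (∏ t ∈ Finset.range k₁,
            (Polynomial.X + Polynomial.C ((t : ℚ) + 1 - (d : ℚ) - (j₁ : ℚ)))).coeff k₁ = 1 := by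
          have := hmonic.coeff_natDegree
          rwa [hdeg] at this
        rw [hks, ← hk₁, hcoef1, mul_one]
      · intro kj hkjP hkjne
        by_cases hcond : d + kj.2 = i₀ + kj.1
        · rw [if_pos hcond]
          by_cases hqz : (q kj.1).coeff kj.2 = 0
          · rw [hqz, map_zero, zero_mul, Polynomial.coeff_zero]
          · -- kj ∈ T, so kj.1 ≤ ks; if kj.1 = ks then kj = (k₁, j₁), contradiction
            have hkjT : kj ∈ T := by
              rw [hT, Finset.mem_filter]
              exact ⟨hkjP, hqz, hcond⟩
            have hle : kj.1 ≤ ks := Finset.le_max' _ _ (Finset.mem_image_of_mem _ hkjT)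
            have hlt : kj.1 < ks := by
              rcases lt_or_eq_of_le hle with h' | h'
              · exact h'
              · exfalso
                apply hkjne
                have h2 : kj.2 = j₁ := by omega
                have h1 : kj.1 = k₁ := by omega
                exact Prod.ext_iff.mpr ⟨h1, h2⟩
            rw [Polynomial.coeff_C_mul]
            have hdle : (∏ t ∈ Finset.range kj.1,
                (Polynomial.X + Polynomial.C ((t : ℚ) + 1 - (d : ℚ) - (kj.2 : ℚ)))).natDegree
                  ≤ kj.1 := by
              refine le_trans (Polynomial.natDegree_prod_le _ _) ?_
              refine le_trans (Finset.sum_le_card_nsmul _ _ 1 fun t _ =>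
                le_of_eq (Polynomial.natDegree_X_add_C _)) ?_
              simp
            rw [Polynomial.coeff_eq_zero_of_natDegree_lt (lt_of_le_of_lt hdle hlt), mul_zero]
        · rw [if_neg hcond, Polynomial.coeff_zero]
    rw [hczero, Polynomial.coeff_zero] at hcoeff
    exact hcoeff.symm
  · -- the recurrence
    intro n hn
    have hnd : d + J ≤ n := hn
    have hceval : ∀ i : ℕ, (c i).eval (n : ℚ)
        = ∑ kj ∈ P, if d + kj.2 = i + kj.1 then
            (q kj.1).coeff kj.2
              * ∏ t ∈ Finset.range kj.1, ((n : ℚ) + ((t : ℚ) + 1 - (d : ℚ) - (kj.2 : ℚ)))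
          else 0 := by
      intro i
      rw [hc, Polynomial.eval_finset_sum]
      refine Finset.sum_congr rfl fun kj _ => ?_
      rw [apply_ite (Polynomial.eval (n : ℚ)), Polynomial.eval_zero, Polynomial.eval_mul,
        Polynomial.eval_C, Polynomial.eval_prod]
      simp only [Polynomial.eval_add, Polynomial.eval_X, Polynomial.eval_C]
    calc ∑ i ∈ Finset.range (M + 1), (c i).eval (n : ℚ) * PowerSeries.coeff (n - i) f
        = ∑ kj ∈ P, ∑ i ∈ Finset.range (M+1), (if d + kj.2 = i + kj.1 then
            (q kj.1).coeff kj.2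
              * ∏ t ∈ Finset.range kj.1, ((n : ℚ) + ((t : ℚ) + 1 - (d : ℚ) - (kj.2 : ℚ)))
          else 0) * PowerSeries.coeff (n - i) f := by
          rw [Finset.sum_comm]
          exact Finset.sum_congr rfl fun i _ => by rw [hceval, Finset.sum_mul]
      _ = ∑ kj ∈ P, (q kj.1).coeff kj.2
            * ((∏ t ∈ Finset.range kj.1, (((n - d - kj.2 : ℕ) : ℚ) + t + 1))
              * PowerSeries.coeff ((n - d - kj.2) + kj.1) f) := by
          refine Finset.sum_congr rfl fun kj hkj => ?_
          obtain ⟨hk, hj⟩ := (hmemP kj).mp hkj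
          rw [Finset.sum_eq_single_of_mem (d + kj.2 - kj.1)
            (Finset.mem_range.mpr (by omega))]
          · rw [if_pos (by omega)]
            have hidx : n - (d + kj.2 - kj.1) = n - d - kj.2 + kj.1 := by omega
            rw [hidx]
            have hcast : ((n - d - kj.2 : ℕ) : ℚ) = (n : ℚ) - d - kj.2 := by
              rw [Nat.sub_sub, Nat.cast_sub (by omega)]
              push_cast
              ring
            have hprod : ∏ t ∈ Finset.range kj.1,
                ((n : ℚ) + ((t : ℚ) + 1 - (d : ℚ) - (kj.2 : ℚ)))
                = ∏ t ∈ Finset.range kj.1, (((n - d - kj.2 : ℕ) : ℚ) + t + 1) :=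
              Finset.prod_congr rfl fun t _ => by rw [hcast]; ring
            rw [hprod, mul_assoc]
          · intro i hi hne
            rw [if_neg (by omega), zero_mul]
      _ = ∑ kj ∈ P, (q kj.1).coeff kj.2
            * PowerSeries.coeff (n - d - kj.2) ((⇑(d⁄dX ℚ))^[kj.1] f) := by
          refine Finset.sum_congr rfl fun kj _ => ?_
          rw [coeff_iter]
      _ = ∑ k ∈ Finset.range (d+1),
            PowerSeries.coeff (n - d) ((q k : PowerSeries ℚ) * (⇑(d⁄dX ℚ))^[k] f) := by
          rw [hP, Finset.sum_product]
          refine Finset.sum_congr rfl fun k hk => ?_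
          rw [coeff_mul_poly]
          refine Finset.sum_subset (Finset.range_subset_range.mpr (by omega)) ?_
          intro j hjmem hjnot
          have hJlt : J < j := by
            rw [Finset.mem_range, not_lt] at hjnot
            omega
          have : (q k).natDegree < j :=
            lt_of_le_of_lt (Finset.le_sup (f := fun k => (q k).natDegree) hk) hJlt
          rw [Polynomial.coeff_eq_zero_of_natDegree_lt this, zero_mul]
      _ = PowerSeries.coeff (n - d)
            (∑ k ∈ Finset.range (d+1), (q k : PowerSeries ℚ) * (⇑(d⁄dX ℚ))^[k] f) :=
          (map_sum _ _ _).symm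
      _ = 0 := by rw [h, map_zero]

/-- The coefficient sequence of any algebraic formal power series over ℚ is
P-recursive: if ∑_{i=0}^{A} pᵢ(X)·fⁱ = 0 with p₀, …, p_A not all zero, then
there exist M ≥ 0, polynomials c₀, …, c_M not all zero, and n₀ ≥ M such that
∑_{i=0}^{M} cᵢ(n)·a(n−i) = 0 for every n ≥ n₀. -/
theorem algebraic_coeffs_pRecursive (f : PowerSeries ℚ) (A : ℕ)
    (p : ℕ → Polynomial ℚ) (hp : ∃ i ≤ A, p i ≠ 0)
    (heq : ∑ i ∈ Finset.range (A + 1), (p i : PowerSeries ℚ) * f ^ i = 0) :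
    ∃ (M : ℕ) (c : ℕ → Polynomial ℚ) (n₀ : ℕ), M ≤ n₀ ∧ (∃ i ≤ M, c i ≠ 0) ∧
      ∀ n : ℕ, n₀ ≤ n →
        ∑ i ∈ Finset.range (M + 1),
          (c i).eval (n : ℚ) * PowerSeries.coeff (n - i) f = 0 := by
  classical
  set P : Polynomial (Polynomial ℚ) :=
    ∑ i ∈ Finset.range (A + 1), Polynomial.C (p i) * Polynomial.X ^ i with hPdef
  obtain ⟨i₀, hi₀A, hpi₀⟩ := hp
  have hP0 : P ≠ 0 := by
    intro h
    apply hpi₀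
    have hcoeff : P.coeff i₀ = p i₀ := by
      rw [hPdef, Polynomial.finset_sum_coeff]
      rw [Finset.sum_congr rfl fun i (_ : i ∈ Finset.range (A+1)) =>
        Polynomial.coeff_C_mul_X_pow (p i) i i₀]
      rw [Finset.sum_ite_eq (Finset.range (A+1)) i₀ p]
      rw [if_pos (Finset.mem_range.mpr (Nat.lt_succ_of_le hi₀A))]
    rw [h, Polynomial.coeff_zero] at hcoeff
    exact hcoeff.symm
  have hPf : Polynomial.aeval f P = 0 := by
    rw [hPdef, map_sum, ← heq]
    refine Finset.sum_congr rfl fun i _ => ?_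
    rw [map_mul, map_pow, Polynomial.aeval_C, Polynomial.aeval_X, algMap_eq]
  obtain ⟨r, q, hq, hsum⟩ := dfinite f P hP0 hPf
  exact rec_of_dfinite f r q hq hsum
end
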